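/- arXiv:1704.06961 — 12 statements merged into one kernel-verified Lean document; each statement's English description precedes it below -/
import Mathlib

section
/- Let X and Y be real Banach spaces and let F : B_X → B_Y be a non-expansive bijection from the closed unit ball of X onto the closed unit ball of Y. Then F(0) = 0. -/
open Metric Set

theorem nonexpansive_bijection_maps_zero_to_zero
    {X Y : Type*} [NormedAddCommGroup X] [NormedSpace ℝ X] [CompleteSpace X]
    [NormedAddCommGroup Y] [NormedSpace ℝ Y] [CompleteSpace Y]
    (F : X → Y)
    (hbij : Set.BijOn F (closedBall (0 : X) 1) (closedBall (0 : Y) 1))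
    (hne : ∀ x ∈ closedBall (0 : X) 1, ∀ y ∈ closedBall (0 : X) 1,
      ‖F x - F y‖ ≤ ‖x - y‖) :
    F 0 = 0 := by
  by_contra ha
  set a := F 0 with haa
  have hane : a ≠ 0 := ha
  have hna : (0:ℝ) < ‖a‖ := norm_pos_iff.mpr hane
  have h0X : (0:X) ∈ closedBall (0:X) 1 := by
    simp [mem_closedBall]
  -- the point v = -(‖a‖⁻¹ • a) lies in the unit ball of Y
  have hv : -(‖a‖⁻¹ • a) ∈ closedBall (0:Y) 1 := by
    simp only [mem_closedBall, dist_zero_right, norm_neg, norm_smul, norm_inv, norm_norm]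
    rw [inv_mul_cancel₀ (ne_of_gt hna)]
  obtain ⟨u, hu, hFu⟩ := hbij.surjOn hv
  have hle : ‖F u - F 0‖ ≤ ‖u - 0‖ := hne u hu 0 h0X
  have hnorm : ‖F u - F 0‖ = 1 + ‖a‖ := by
    rw [hFu, ← haa]
    have : -(‖a‖⁻¹ • a) - a = -((‖a‖⁻¹ + 1) • a) := by
      rw [add_smul, one_smul, neg_add]
      abel
    rw [this, norm_neg, norm_smul, Real.norm_eq_abs,
      abs_of_pos (by positivity), add_mul, one_mul,
      inv_mul_cancel₀ (ne_of_gt hna)]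
  have hu1 : ‖u - 0‖ ≤ 1 := by
    simpa [mem_closedBall, dist_zero_right] using hu
  linarith [hnorm ▸ hle]
end

section
/- Let X and Y be real Banach spaces and let F : B_X → B_Y be a non-expansive bijection from the closed unit ball of X onto the closed unit ball of Y. Then the preimage under F of the unit sphere of Y is contained in the unit sphere of X; that is, if x ∈ B_X and ‖F(x)‖ = 1, then ‖x‖ = 1. -/
open Metric Set

theorem nonexpansive_bijection_preimage_sphere_subset_sphere
    {X Y : Type*} [NormedAddCommGroup X] [NormedSpace ℝ X] [CompleteSpace X]
    [NormedAddCommGroup Y] [NormedSpace ℝ Y] [CompleteSpace Y]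
    (F : X → Y)
    (hbij : Set.BijOn F (closedBall (0 : X) 1) (closedBall (0 : Y) 1))
    (hne : ∀ x ∈ closedBall (0 : X) 1, ∀ y ∈ closedBall (0 : X) 1,
      ‖F x - F y‖ ≤ ‖x - y‖)
    (x : X) (hx : x ∈ closedBall (0 : X) 1) (hFx : ‖F x‖ = 1) :
    ‖x‖ = 1 := by
  have hxle : ‖x‖ ≤ 1 := mem_closedBall_zero_iff.mp hx
  have hmem : -F x ∈ closedBall (0 : Y) 1 := by
    rw [mem_closedBall_zero_iff, norm_neg, hFx]
  obtain ⟨u, hu, hFu⟩ := hbij.surjOn hmem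
  have hule : ‖u‖ ≤ 1 := mem_closedBall_zero_iff.mp hu
  have h2 : (2 : ℝ) = ‖F u - F x‖ := by
    rw [hFu, ← norm_neg, neg_sub, sub_neg_eq_add, ← two_smul ℝ (F x),
      norm_smul, hFx]
    simp
  have hch : ‖F u - F x‖ ≤ ‖u - x‖ := hne u hu x hx
  have : (2 : ℝ) ≤ ‖u‖ + ‖x‖ := h2 ▸ hch.trans (norm_sub_le u x)
  linarith
end

section
/- Let X and Y be real Banach spaces and let F : B_X → B_Y be a non-expansive bijection from the closed unit ball of X onto the closed unit ball of Y. If x ∈ B_X is such that F(x) is an extreme point of B_Y, then F(a·x) = a·F(x) for every a ∈ (0, 1). -/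
open Metric Set

theorem nonexpansive_bijection_extreme_point_homogeneous
    {X Y : Type*} [NormedAddCommGroup X] [NormedSpace ℝ X] [CompleteSpace X]
    [NormedAddCommGroup Y] [NormedSpace ℝ Y] [CompleteSpace Y]
    (F : X → Y)
    (hbij : Set.BijOn F (closedBall (0 : X) 1) (closedBall (0 : Y) 1))
    (hne : ∀ x ∈ closedBall (0 : X) 1, ∀ y ∈ closedBall (0 : X) 1,
      ‖F x - F y‖ ≤ ‖x - y‖)
    (x : X) (hx : x ∈ closedBall (0 : X) 1)
    (hext : F x ∈ closedBall (0 : Y) 1 ∧ ∀ y : Y, y ≠ 0 →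
      F x + y ∉ closedBall (0 : Y) 1 ∨ F x - y ∉ closedBall (0 : Y) 1) :
    ∀ a ∈ Set.Ioo (0 : ℝ) 1, F (a • x) = a • F x := by
  have h0X : (0:X) ∈ closedBall (0:X) 1 := by simp
  -- Step 1 : F 0 = 0
  have hF0 : F 0 = 0 := by
    by_contra hb
    have hbmem : F 0 ∈ closedBall (0:Y) 1 := hbij.mapsTo h0X
    have hbn : ‖F 0‖ ≤ 1 := by simpa [mem_closedBall, dist_zero_right] using hbmem
    have hbpos : 0 < ‖F 0‖ := norm_pos_iff.mpr hb
    set y : Y := -(‖F 0‖⁻¹ • F 0) with hy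
    have hyn : ‖y‖ = 1 := by
      simp [hy, norm_smul, abs_of_pos (inv_pos.mpr hbpos),
        inv_mul_cancel₀ hbpos.ne']
    have hymem : y ∈ closedBall (0:Y) 1 := by
      simp [mem_closedBall, dist_zero_right, hyn]
    obtain ⟨z, hz, hzy⟩ := hbij.surjOn hymem
    have hzn : ‖z‖ ≤ 1 := by simpa [mem_closedBall, dist_zero_right] using hz
    have h1 : ‖F z - F 0‖ ≤ ‖z - 0‖ := hne z hz 0 h0X
    rw [hzy] at h1
    have hyb : y - F 0 = -((‖F 0‖⁻¹ + 1) • F 0) := by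
      rw [hy]; module
    have h2 : ‖y - F 0‖ = 1 + ‖F 0‖ := by
      rw [hyb, norm_neg, norm_smul, Real.norm_eq_abs,
        abs_of_pos (by positivity : (0:ℝ) < ‖F 0‖⁻¹ + 1), add_mul,
        inv_mul_cancel₀ hbpos.ne', one_mul]
    rw [h2, sub_zero] at h1
    linarith
  -- Step 2 : main argument
  intro a ha
  obtain ⟨ha0, ha1⟩ := ha
  have hxn : ‖x‖ ≤ 1 := by simpa [mem_closedBall, dist_zero_right] using hx
  have haxmem : a • x ∈ closedBall (0:X) 1 := by
    simp only [mem_closedBall, dist_zero_right, norm_smul, Real.norm_eq_abs,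
      abs_of_pos ha0]
    nlinarith [norm_nonneg x]
  have hun : ‖F x‖ ≤ 1 := by simpa [mem_closedBall, dist_zero_right] using hext.1
  have hv : ‖F (a • x)‖ ≤ a := by
    have h := hne (a • x) haxmem 0 h0X
    rw [hF0, sub_zero, sub_zero, norm_smul, Real.norm_eq_abs, abs_of_pos ha0] at h
    nlinarith
  have huv : ‖F x - F (a • x)‖ ≤ 1 - a := by
    have h := hne x hx (a • x) haxmem
    have : x - a • x = (1 - a) • x := by module
    rw [this, norm_smul, Real.norm_eq_abs, abs_of_pos (by linarith : (0:ℝ) < 1 - a)] at h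
    nlinarith
  by_contra hgoal
  have hd : F (a • x) - a • F x ≠ 0 := sub_ne_zero.mpr hgoal
  rcases hext.2 (F (a • x) - a • F x) hd with h | h
  · apply h
    have heq : F x + (F (a • x) - a • F x) = F (a • x) + (1 - a) • F x := by module
    rw [mem_closedBall, dist_zero_right, heq]
    calc ‖F (a • x) + (1 - a) • F x‖ ≤ ‖F (a • x)‖ + ‖(1 - a) • F x‖ := norm_add_le _ _
      _ ≤ a + (1 - a) * 1 := by
          rw [norm_smul, Real.norm_eq_abs, abs_of_pos (by linarith : (0:ℝ) < 1 - a)]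
          have : (1 - a) * ‖F x‖ ≤ (1 - a) * 1 := by nlinarith
          linarith
      _ = 1 := by ring
  · apply h
    have heq : F x - (F (a • x) - a • F x) = (F x - F (a • x)) + a • F x := by module
    rw [mem_closedBall, dist_zero_right, heq]
    calc ‖(F x - F (a • x)) + a • F x‖ ≤ ‖F x - F (a • x)‖ + ‖a • F x‖ := norm_add_le _ _
      _ ≤ (1 - a) + a * 1 := by
          rw [norm_smul, Real.norm_eq_abs, abs_of_pos ha0]
          have : a * ‖F x‖ ≤ a * 1 := by nlinarith
          linarith
      _ = 1 := by ring
end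

section
/- Let X and Y be real Banach spaces and let F : B_X → B_Y be a non-expansive bijection from the closed unit ball of X onto the closed unit ball of Y. If x ∈ B_X is such that F(x) is an extreme point of B_Y, then x is an extreme point of B_X. -/
open Metric Set

theorem nonexpansive_bijection_extreme_point_preimage_extreme
    {X Y : Type*} [NormedAddCommGroup X] [NormedSpace ℝ X] [CompleteSpace X]
    [NormedAddCommGroup Y] [NormedSpace ℝ Y] [CompleteSpace Y]
    (F : X → Y)
    (hbij : Set.BijOn F (closedBall (0 : X) 1) (closedBall (0 : Y) 1))
    (hne : ∀ x ∈ closedBall (0 : X) 1, ∀ y ∈ closedBall (0 : X) 1,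
      ‖F x - F y‖ ≤ ‖x - y‖)
    (x : X) (hx : x ∈ closedBall (0 : X) 1)
    (hext : F x ∈ closedBall (0 : Y) 1 ∧ ∀ y : Y, y ≠ 0 →
      F x + y ∉ closedBall (0 : Y) 1 ∨ F x - y ∉ closedBall (0 : Y) 1) :
    x ∈ closedBall (0 : X) 1 ∧ ∀ y : X, y ≠ 0 →
      x + y ∉ closedBall (0 : X) 1 ∨ x - y ∉ closedBall (0 : X) 1 := by
  obtain ⟨huB, hu⟩ := hext
  refine ⟨hx, fun y hy => ?_⟩
  by_contra hcon
  push_neg at hcon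
  obtain ⟨h1, h2⟩ := hcon
  have h0X : (0 : X) ∈ closedBall (0 : X) 1 := by
    simp [mem_closedBall_zero_iff]
  -- F(x+y) ≠ F(x-y)
  have hxy_ne : x + y ≠ x - y := by
    intro h
    apply hy
    have : y + y = 0 := by
      have := sub_eq_zero.mpr h
      rw [show x + y - (x - y) = y + y by abel] at this
      exact this
    have h2y : (2 : ℝ) • y = 0 := by rw [two_smul]; exact this
    simpa using (smul_eq_zero.mp h2y).resolve_left (by norm_num)
  have hvw : F (x + y) ≠ F (x - y) := fun h => hxy_ne (hbij.injOn h1 h2 h)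
  -- ‖F x‖ = 1
  have huBn : ‖F x‖ ≤ 1 := mem_closedBall_zero_iff.mp huB
  have hu1 : ‖F x‖ = 1 := by
    by_contra hne1
    have hlt : ‖F x‖ < 1 := lt_of_le_of_ne huBn hne1
    set d := F (x + y) - F (x - y) with hd
    have hd0 : d ≠ 0 := sub_ne_zero.mpr hvw
    have hdn : (0 : ℝ) < ‖d‖ := norm_pos_iff.mpr hd0
    set z := ((1 - ‖F x‖) / ‖d‖) • d with hz
    have hpos : (0:ℝ) < (1 - ‖F x‖) / ‖d‖ := div_pos (by linarith) hdn
    have hz0 : z ≠ 0 := smul_ne_zero (ne_of_gt hpos) hd0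
    have hzn : ‖z‖ = 1 - ‖F x‖ := by
      rw [hz, norm_smul, Real.norm_eq_abs, abs_of_pos hpos,
        div_mul_cancel₀ _ (ne_of_gt hdn)]
    rcases hu z hz0 with h | h
    · exact h (mem_closedBall_zero_iff.mpr (by
        calc ‖F x + z‖ ≤ ‖F x‖ + ‖z‖ := norm_add_le _ _
        _ = 1 := by rw [hzn]; ring))
    · exact h (mem_closedBall_zero_iff.mpr (by
        calc ‖F x - z‖ ≤ ‖F x‖ + ‖z‖ := norm_sub_le _ _
        _ = 1 := by rw [hzn]; ring))
  -- F 0 = 0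
  have hF0 : F 0 = 0 := by
    by_contra hc0
    have hcB : ‖F 0‖ ≤ 1 := mem_closedBall_zero_iff.mp (hbij.mapsTo h0X)
    have hcn : (0 : ℝ) < ‖F 0‖ := norm_pos_iff.mpr hc0
    set q := -((‖F 0‖⁻¹ : ℝ) • F 0) with hq
    have hqn : ‖q‖ = 1 := by
      rw [hq, norm_neg, norm_smul, Real.norm_eq_abs, abs_of_pos (by positivity),
        inv_mul_cancel₀ (ne_of_gt hcn)]
    obtain ⟨p, hp, hpq⟩ := hbij.surjOn (mem_closedBall_zero_iff.mpr hqn.le)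
    have hp1 : ‖p‖ ≤ 1 := mem_closedBall_zero_iff.mp hp
    have hle := hne p hp 0 h0X
    rw [hpq, sub_zero] at hle
    have : ‖q - F 0‖ = 1 + ‖F 0‖ := by
      rw [hq, show -((‖F 0‖⁻¹ : ℝ) • F 0) - F 0 = -((‖F 0‖⁻¹ + 1 : ℝ) • F 0) by
        rw [add_smul, one_smul]; abel]
      rw [norm_neg, norm_smul, Real.norm_eq_abs, abs_of_pos (by positivity),
        add_mul, inv_mul_cancel₀ (ne_of_gt hcn), one_mul]
    have : (1 : ℝ) + ‖F 0‖ ≤ 1 := this ▸ hle.trans hp1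
    linarith
  -- ‖x‖ = 1
  have hx1 : ‖x‖ = 1 := by
    have h := hne x hx 0 h0X
    rw [hF0, sub_zero, sub_zero] at h
    have hxle : ‖x‖ ≤ 1 := mem_closedBall_zero_iff.mp hx
    linarith [hu1 ▸ h]
  -- ‖x+y‖ = 1 and ‖x-y‖ = 1
  have hxyle : ‖x + y‖ ≤ 1 := mem_closedBall_zero_iff.mp h1
  have hxyle' : ‖x - y‖ ≤ 1 := mem_closedBall_zero_iff.mp h2
  have hsum : (2 : ℝ) ≤ ‖x + y‖ + ‖x - y‖ := by
    calc (2 : ℝ) = ‖(x + y) + (x - y)‖ := by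
          rw [show (x + y) + (x - y) = (2 : ℝ) • x by rw [two_smul]; abel,
            norm_smul, hx1]
          norm_num
      _ ≤ ‖x + y‖ + ‖x - y‖ := norm_add_le _ _
  have hxy1 : ‖x + y‖ = 1 := by linarith
  have hxy1' : ‖x - y‖ = 1 := by linarith
  -- rigidity: q ∈ B_Y, ‖q‖ ≤ 1/2, ‖F x - q‖ ≤ 1/2 → q = (1/2) • F x
  have key : ∀ q : Y, ‖q‖ ≤ 1/2 → ‖F x - q‖ ≤ 1/2 → q = (2⁻¹ : ℝ) • F x := by
    intro q hqn hFq
    by_contra hq'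
    have hz0 : (2 : ℝ) • q - F x ≠ 0 := by
      intro h
      apply hq'
      have : (2 : ℝ) • q = F x := by rwa [sub_eq_zero] at h
      rw [← this, smul_smul]; norm_num
    rcases hu _ hz0 with h | h
    · apply h
      rw [show F x + ((2 : ℝ) • q - F x) = (2 : ℝ) • q by abel]
      apply mem_closedBall_zero_iff.mpr
      rw [norm_smul, Real.norm_eq_abs]
      norm_num
      linarith
    · apply h
      rw [show F x - ((2 : ℝ) • q - F x) = (2 : ℝ) • (F x - q) by
        rw [smul_sub, two_smul, two_smul]; abel]
      apply mem_closedBall_zero_iff.mpr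
      rw [norm_smul, Real.norm_eq_abs]
      norm_num
      linarith
  -- the two points
  set p₀ := (2⁻¹ : ℝ) • x with hp₀
  set p₁ := (2⁻¹ : ℝ) • (x + y) with hp₁
  have hp₀n : ‖p₀‖ = 1/2 := by
    rw [hp₀, norm_smul, Real.norm_eq_abs, hx1]; norm_num
  have hp₁n : ‖p₁‖ = 1/2 := by
    rw [hp₁, norm_smul, Real.norm_eq_abs, hxy1]; norm_num
  have hp₀B : p₀ ∈ closedBall (0 : X) 1 := mem_closedBall_zero_iff.mpr (by rw [hp₀n]; norm_num)
  have hp₁B : p₁ ∈ closedBall (0 : X) 1 := mem_closedBall_zero_iff.mpr (by rw [hp₁n]; norm_num)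
  have hq₀ : F p₀ = (2⁻¹ : ℝ) • F x := by
    apply key
    · have h := hne p₀ hp₀B 0 h0X
      rw [hF0, sub_zero, sub_zero] at h
      linarith [hp₀n ▸ h]
    · have h := hne x hx p₀ hp₀B
      have : ‖x - p₀‖ = 1/2 := by
        rw [hp₀, show x - (2⁻¹ : ℝ) • x = (2⁻¹ : ℝ) • x by module,
          norm_smul, Real.norm_eq_abs, hx1]
        norm_num
      linarith [this ▸ h]
  have hq₁ : F p₁ = (2⁻¹ : ℝ) • F x := by
    apply key
    · have h := hne p₁ hp₁B 0 h0X
      rw [hF0, sub_zero, sub_zero] at h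
      linarith [hp₁n ▸ h]
    · have h := hne x hx p₁ hp₁B
      have : ‖x - p₁‖ = 1/2 := by
        rw [hp₁, show x - (2⁻¹ : ℝ) • (x + y) = (2⁻¹ : ℝ) • (x - y) by module,
          norm_smul, Real.norm_eq_abs, hxy1']
        norm_num
      linarith [this ▸ h]
  have : p₀ = p₁ := hbij.injOn hp₀B hp₁B (by rw [hq₀, hq₁])
  rw [hp₀, hp₁] at this
  apply hy
  have := sub_eq_zero.mpr this
  rw [← smul_sub, show x - (x + y) = -y by abel, smul_neg, neg_eq_zero] at this
  simpa using (smul_eq_zero.mp this).resolve_left (by norm_num)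
end

section
/- Let X and Y be real Banach spaces and let F : B_X → B_Y be a non-expansive bijection from the closed unit ball of X onto the closed unit ball of Y. If x ∈ B_X is such that F(x) is an extreme point of B_Y, then F(−x) = −F(x). -/
open Metric Set

theorem nonexpansive_bijection_extreme_point_odd
    {X Y : Type*} [NormedAddCommGroup X] [NormedSpace ℝ X] [CompleteSpace X]
    [NormedAddCommGroup Y] [NormedSpace ℝ Y] [CompleteSpace Y]
    (F : X → Y)
    (hbij : Set.BijOn F (closedBall (0 : X) 1) (closedBall (0 : Y) 1))
    (hne : ∀ x ∈ closedBall (0 : X) 1, ∀ y ∈ closedBall (0 : X) 1,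
      ‖F x - F y‖ ≤ ‖x - y‖)
    (x : X) (hx : x ∈ closedBall (0 : X) 1)
    (hext : F x ∈ closedBall (0 : Y) 1 ∧ ∀ y : Y, y ≠ 0 →
      F x + y ∉ closedBall (0 : Y) 1 ∨ F x - y ∉ closedBall (0 : Y) 1) :
    F (-x) = -F x := by
  obtain ⟨hFx, hext⟩ := hext
  have h0X : (0 : X) ∈ closedBall (0 : X) 1 := by simp
  have hxn : ‖x‖ ≤ 1 := by simpa [mem_closedBall_zero_iff] using hx
  -- Step 1 : F 0 = 0
  have hF0 : F 0 = 0 := by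
    by_contra hc
    set c := F 0 with hc'
    have hcB : c ∈ closedBall (0 : Y) 1 := hbij.1 h0X
    have hcn : ‖c‖ ≤ 1 := by simpa [mem_closedBall_zero_iff] using hcB
    have hcpos : 0 < ‖c‖ := norm_pos_iff.mpr hc
    set y : Y := -(‖c‖⁻¹ • c) with hy
    have hyn : ‖y‖ = 1 := by
      simp [hy, norm_smul, abs_of_pos (inv_pos.mpr hcpos),
        inv_mul_cancel₀ hcpos.ne']
    have hyB : y ∈ closedBall (0 : Y) 1 := by
      rw [mem_closedBall_zero_iff]; exact hyn.le
    obtain ⟨u0, hu0B, hu0⟩ := hbij.2.2 hyB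
    have h1 : ‖F u0 - F 0‖ ≤ ‖u0 - 0‖ := hne u0 hu0B 0 h0X
    have h2 : ‖u0 - 0‖ ≤ 1 := by
      simpa [mem_closedBall_zero_iff] using hu0B
    have h3 : y - c = -((‖c‖⁻¹ + 1) • c) := by
      rw [hy]; module
    have h4 : ‖F u0 - F 0‖ = 1 + ‖c‖ := by
      rw [hu0, ← hc', h3, norm_neg, norm_smul, Real.norm_eq_abs,
        abs_of_pos (by positivity : (0:ℝ) < ‖c‖⁻¹ + 1), add_mul,
        inv_mul_cancel₀ hcpos.ne']
      ring
    linarith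
  -- Step 2 : pick u with F u = -F x
  have hnegB : -F x ∈ closedBall (0 : Y) 1 := by
    rw [mem_closedBall_zero_iff, norm_neg]
    simpa [mem_closedBall_zero_iff] using hFx
  obtain ⟨u, huB, hu⟩ := hbij.2.2 hnegB
  have hun : ‖u‖ ≤ 1 := by simpa [mem_closedBall_zero_iff] using huB
  -- Step 3 : the midpoint maps to 0
  set m : X := (2 : ℝ)⁻¹ • (x + u) with hm
  have hmB : m ∈ closedBall (0 : X) 1 := by
    rw [mem_closedBall_zero_iff, hm, norm_smul]
    have := norm_add_le x u
    rw [Real.norm_eq_abs, abs_of_pos (by norm_num : (0:ℝ) < (2:ℝ)⁻¹)]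
    nlinarith
  have hmx : ‖m - x‖ ≤ 1 := by
    have h : m - x = (2 : ℝ)⁻¹ • (u - x) := by
      rw [hm]; module
    rw [h, norm_smul, Real.norm_eq_abs, abs_of_pos (by norm_num : (0:ℝ) < (2:ℝ)⁻¹)]
    have := norm_sub_le u x
    nlinarith
  have hmu : ‖m - u‖ ≤ 1 := by
    have h : m - u = (2 : ℝ)⁻¹ • (x - u) := by
      rw [hm]; module
    rw [h, norm_smul, Real.norm_eq_abs, abs_of_pos (by norm_num : (0:ℝ) < (2:ℝ)⁻¹)]
    have := norm_sub_le x u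
    nlinarith
  have hFm : F m = 0 := by
    by_contra hw
    rcases hext (F m) hw with h | h
    · apply h
      rw [mem_closedBall_zero_iff]
      have := hne m hmB u huB
      rw [hu] at this
      calc ‖F x + F m‖ = ‖F m - -F x‖ := by rw [sub_neg_eq_add, add_comm]
        _ ≤ ‖m - u‖ := this
        _ ≤ 1 := hmu
    · apply h
      rw [mem_closedBall_zero_iff]
      have := hne x hx m hmB
      calc ‖F x - F m‖ ≤ ‖x - m‖ := this
        _ = ‖m - x‖ := by rw [norm_sub_rev]
        _ ≤ 1 := hmx
  -- Step 4 : injectivity gives m = 0, i.e. u = -x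
  have hm0 : m = 0 := hbij.2.1 hmB h0X (by rw [hFm, hF0])
  have hux : u = -x := by
    have h2 : x + u = 0 := by
      have := congrArg (fun z => (2 : ℝ) • z) hm0
      simpa [hm, smul_smul] using this
    exact eq_neg_of_add_eq_zero_right h2
  rw [← hux, hu]
end

section
/- Let X be a real Banach space, Y a strictly convex real Banach space, and let F : B_X → B_Y be a non-expansive bijection from the closed unit ball of X onto the closed unit ball of Y. Then F maps the unit sphere S_X bijectively onto the unit sphere S_Y. -/
open Metric Set

theorem nonexpansive_bijection_strictly_convex_maps_sphere_bijectively
    {X Y : Type*} [NormedAddCommGroup X] [NormedSpace ℝ X] [CompleteSpace X]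
    [NormedAddCommGroup Y] [NormedSpace ℝ Y] [CompleteSpace Y]
    [StrictConvexSpace ℝ Y]
    (F : X → Y)
    (hbij : Set.BijOn F (closedBall (0 : X) 1) (closedBall (0 : Y) 1))
    (hne : ∀ x ∈ closedBall (0 : X) 1, ∀ y ∈ closedBall (0 : X) 1,
      ‖F x - F y‖ ≤ ‖x - y‖) :
    Set.BijOn F (sphere (0 : X) 1) (sphere (0 : Y) 1) := by
  have hball : ∀ x : X, x ∈ closedBall (0 : X) 1 ↔ ‖x‖ ≤ 1 := by
    intro x; simp [mem_closedBall, dist_zero_right]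
  have hballY : ∀ y : Y, y ∈ closedBall (0 : Y) 1 ↔ ‖y‖ ≤ 1 := by
    intro y; simp [mem_closedBall, dist_zero_right]
  -- Step A: any preimage of a unit vector is a unit vector
  have stepA : ∀ y : Y, ‖y‖ = 1 → ∀ x ∈ closedBall (0 : X) 1, F x = y → ‖x‖ = 1 := by
    intro y hy x hx hFx
    obtain ⟨x', hx', hFx'⟩ := hbij.surjOn (a := -y) (by rw [hballY]; simp [hy])
    have h1 : ‖F x - F x'‖ ≤ ‖x - x'‖ := hne x hx x' hx'
    rw [hFx, hFx'] at h1
    have h2 : ‖y - -y‖ = 2 := by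
      rw [sub_neg_eq_add]
      have : y + y = (2 : ℝ) • y := by module
      rw [this, norm_smul, hy]; norm_num
    have h3 : ‖x - x'‖ ≤ ‖x‖ + ‖x'‖ := norm_sub_le _ _
    have hx1 : ‖x‖ ≤ 1 := (hball x).1 hx
    have hx'1 : ‖x'‖ ≤ 1 := (hball x').1 hx'
    linarith [h2 ▸ h1]
  -- Step B: F 0 = 0
  have hzero : (0 : X) ∈ closedBall (0 : X) 1 := by rw [hball]; simp
  have stepB : F 0 = 0 := by
    by_contra h0
    set a := F 0 with ha
    have hane : ‖a‖ ≠ 0 := norm_ne_zero_iff.mpr h0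
    have hapos : 0 < ‖a‖ := norm_pos_iff.mpr h0
    set y : Y := ‖a‖⁻¹ • a with hy
    have hyn : ‖y‖ = 1 := by
      rw [hy, norm_smul, norm_inv, norm_norm, inv_mul_cancel₀ hane]
    have hmy : ‖-y‖ = 1 := by rw [norm_neg]; exact hyn
    obtain ⟨x', hx', hFx'⟩ := hbij.surjOn (a := -y) (by rw [hballY, hmy])
    have hx'n : ‖x'‖ = 1 := stepA (-y) hmy x' hx' hFx'
    have h1 : ‖F x' - F 0‖ ≤ ‖x' - 0‖ := hne x' hx' 0 hzero
    rw [hFx', sub_zero, hx'n] at h1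
    have h2 : ‖-y - a‖ = 1 + ‖a‖ := by
      have : -y - a = -((‖a‖⁻¹ + 1) • a) := by rw [hy]; module
      rw [this, norm_neg, norm_smul, Real.norm_eq_abs,
        abs_of_pos (by positivity : (0:ℝ) < ‖a‖⁻¹ + 1)]
      field_simp
    rw [h2] at h1
    linarith
  -- Step C: F (t • x) = t • y along radii
  have stepC : ∀ y : Y, ‖y‖ = 1 → ∀ x ∈ closedBall (0 : X) 1, F x = y →
      ∀ t : ℝ, 0 ≤ t → t ≤ 1 → F (t • x) = t • y := by
    intro y hy x hx hFx t ht0 ht1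
    have hxn : ‖x‖ = 1 := stepA y hy x hx hFx
    have htx : t • x ∈ closedBall (0 : X) 1 := by
      rw [hball, norm_smul, Real.norm_eq_abs, abs_of_nonneg ht0, hxn, mul_one]
      exact ht1
    set w := F (t • x) with hw
    have hwt : ‖w‖ ≤ t := by
      have := hne (t • x) htx 0 hzero
      rw [stepB, sub_zero, sub_zero, norm_smul, Real.norm_eq_abs,
        abs_of_nonneg ht0, hxn, mul_one] at this
      exact this
    have hyw : ‖y - w‖ ≤ 1 - t := by
      have := hne x hx (t • x) htx
      rw [hFx, ← hw] at this
      have h2 : ‖x - t • x‖ = 1 - t := by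
        have : x - t • x = (1 - t) • x := by module
        rw [this, norm_smul, Real.norm_eq_abs, abs_of_nonneg (by linarith), hxn, mul_one]
      rw [h2] at this
      exact this
    have hsum : ‖(y - w) + w‖ = ‖y - w‖ + ‖w‖ := by
      have h3 : (y - w) + w = y := by abel
      rw [h3, hy]
      have h4 : 1 ≤ ‖y - w‖ + ‖w‖ := by
        calc (1:ℝ) = ‖y‖ := hy.symm
        _ = ‖(y - w) + w‖ := by rw [h3]
        _ ≤ ‖y - w‖ + ‖w‖ := norm_add_le _ _
      linarith [hwt, hyw, h4]
    -- from equality, also ‖w‖ = t and ‖y - w‖ = 1 - t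
    have hweq : ‖w‖ = t := by
      have h4 : (1:ℝ) = ‖y - w‖ + ‖w‖ := by
        rw [← hsum, show (y - w) + w = y by abel, hy]
      linarith
    have hyweq : ‖y - w‖ = 1 - t := by
      have h4 : (1:ℝ) = ‖y - w‖ + ‖w‖ := by
        rw [← hsum, show (y - w) + w = y by abel, hy]
      linarith
    have hray : SameRay ℝ (y - w) w := sameRay_iff_norm_add.mpr hsum
    have := hray.norm_smul_eq
    rw [hyweq, hweq] at this
    -- (1 - t) • w = t • (y - w)  ⟹  w = t • y
    have : w = t • y := by
      have h5 : (1 - t) • w + t • w = t • y := by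
        rw [this]; module
      have h6 : ((1 - t) + t) • w = t • y := by rw [add_smul]; exact h5
      rw [show (1 - t) + t = (1:ℝ) by ring, one_smul] at h6
      exact h6
    exact this
  constructor
  · -- MapsTo
    intro x hx
    have hxn : ‖x‖ = 1 := by simpa using hx
    have hxB : x ∈ closedBall (0 : X) 1 := sphere_subset_closedBall hx
    set w := F x with hw
    have hwB : ‖w‖ ≤ 1 := (hballY w).1 (hbij.mapsTo hxB)
    have hw0 : w ≠ 0 := by
      intro h
      have : F x = F 0 := by rw [← hw, h, stepB]
      have := hbij.injOn hxB hzero this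
      rw [this] at hxn; simp at hxn
    have hwpos : 0 < ‖w‖ := norm_pos_iff.mpr hw0
    set y : Y := ‖w‖⁻¹ • w with hy
    have hyn : ‖y‖ = 1 := by
      rw [hy, norm_smul, norm_inv, norm_norm, inv_mul_cancel₀ (ne_of_gt hwpos)]
    obtain ⟨xy, hxyB, hFxy⟩ := hbij.surjOn (a := y) (by rw [hballY, hyn])
    have hseg : F (‖w‖ • xy) = ‖w‖ • y := stepC y hyn xy hxyB hFxy ‖w‖ hwpos.le hwB
    have hwy : ‖w‖ • y = w := by
      rw [hy, smul_smul, mul_inv_cancel₀ (ne_of_gt hwpos), one_smul]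
    rw [hwy] at hseg
    have hxyn : ‖xy‖ = 1 := stepA y hyn xy hxyB hFxy
    have hsB : ‖w‖ • xy ∈ closedBall (0 : X) 1 := by
      rw [hball, norm_smul, norm_norm, hxyn, mul_one]; exact hwB
    have : x = ‖w‖ • xy := hbij.injOn hxB hsB (by rw [hseg])
    have : ‖x‖ = ‖w‖ := by
      rw [this, norm_smul, norm_norm, hxyn, mul_one]
    rw [hxn] at this
    simp [mem_sphere, dist_zero_right, ← hw, ← this]
  constructor
  · exact hbij.injOn.mono sphere_subset_closedBall
  · -- SurjOn
    intro y hy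
    have hyn : ‖y‖ = 1 := by simpa using hy
    obtain ⟨x, hxB, hFx⟩ := hbij.surjOn (a := y) (by rw [hballY, hyn])
    have hxn : ‖x‖ = 1 := stepA y hyn x hxB hFx
    exact ⟨x, by simp [mem_sphere, dist_zero_right, hxn], hFx⟩
end

section
/- Let X be a real Banach space, Y a strictly convex real Banach space, and let F : B_X → B_Y be a non-expansive bijection from the closed unit ball of X onto the closed unit ball of Y. Then F(a·x) = a·F(x) for every x ∈ S_X and every a ∈ (0, 1). -/
open Metric Set

theorem nonexpansive_bijection_strictly_convex_homogeneous_on_sphere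
    {X Y : Type*} [NormedAddCommGroup X] [NormedSpace ℝ X] [CompleteSpace X]
    [NormedAddCommGroup Y] [NormedSpace ℝ Y] [CompleteSpace Y]
    [StrictConvexSpace ℝ Y]
    (F : X → Y)
    (hbij : Set.BijOn F (closedBall (0 : X) 1) (closedBall (0 : Y) 1))
    (hne : ∀ x ∈ closedBall (0 : X) 1, ∀ y ∈ closedBall (0 : X) 1,
      ‖F x - F y‖ ≤ ‖x - y‖) :
    ∀ x ∈ sphere (0 : X) 1, ∀ a ∈ Set.Ioo (0 : ℝ) 1, F (a • x) = a • F x := by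
  have h0X : (0 : X) ∈ closedBall (0 : X) 1 := by
    simp [mem_closedBall_zero_iff]
  -- Step 1 : F 0 = 0
  have hF0 : F 0 = 0 := by
    by_contra h
    have hn : 0 < ‖F 0‖ := norm_pos_iff.mpr h
    set y : Y := -(‖F 0‖⁻¹ • F 0) with hy
    have hyn : ‖y‖ = 1 := by
      rw [hy, norm_neg, norm_smul, norm_inv, norm_norm]
      field_simp
    have hyB : y ∈ closedBall (0 : Y) 1 := by
      rw [mem_closedBall_zero_iff, hyn]
    obtain ⟨x, hxB, hxy⟩ := hbij.surjOn hyB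
    have h1 : ‖F 0 - F x‖ ≤ ‖(0 : X) - x‖ := hne 0 h0X x hxB
    have h2 : ‖(0 : X) - x‖ ≤ 1 := by
      rw [zero_sub, norm_neg]
      exact mem_closedBall_zero_iff.mp hxB
    have h3 : ‖F 0 - F x‖ = ‖F 0‖ + 1 := by
      rw [hxy, hy, sub_neg_eq_add]
      have : F 0 + ‖F 0‖⁻¹ • F 0 = (1 + ‖F 0‖⁻¹) • F 0 := by
        rw [add_smul, one_smul]
      rw [this, norm_smul, Real.norm_eq_abs]
      have : |1 + ‖F 0‖⁻¹| = 1 + ‖F 0‖⁻¹ := by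
        rw [abs_of_pos]; positivity
      rw [this, add_mul, one_mul, inv_mul_cancel₀ (ne_of_gt hn)]
    linarith [hn, h1.trans h2, h3 ▸ (h1.trans h2)]
  -- Step 2 : key homogeneity for points mapped to the sphere
  have key : ∀ u : X, ‖u‖ = 1 → ‖F u‖ = 1 → ∀ a : ℝ, 0 < a → a < 1 →
      F (a • u) = a • F u := by
    intro u hu hFu a ha0 ha1
    have huB : u ∈ closedBall (0 : X) 1 := by rw [mem_closedBall_zero_iff, hu]
    have hauB : a • u ∈ closedBall (0 : X) 1 := by
      rw [mem_closedBall_zero_iff, norm_smul, hu, mul_one, Real.norm_eq_abs,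
        abs_of_pos ha0]
      linarith
    set y : Y := F (a • u) with hydef
    have h1 : ‖y‖ ≤ a := by
      have := hne (a • u) hauB 0 h0X
      rw [hF0, sub_zero, sub_zero, norm_smul, hu, mul_one, Real.norm_eq_abs,
        abs_of_pos ha0] at this
      exact this
    have h2 : ‖F u - y‖ ≤ 1 - a := by
      have := hne u huB (a • u) hauB
      have heq : ‖u - a • u‖ = 1 - a := by
        have : u - a • u = (1 - a) • u := by
          rw [sub_smul, one_smul]
        rw [this, norm_smul, hu, mul_one, Real.norm_eq_abs, abs_of_pos (by linarith)]
      rw [heq] at this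
      exact this
    have htri : ‖y + (F u - y)‖ = ‖y‖ + ‖F u - y‖ := by
      have hsum : y + (F u - y) = F u := by abel
      rw [hsum, hFu]
      have hge : (1 : ℝ) ≤ ‖y‖ + ‖F u - y‖ := by
        calc (1 : ℝ) = ‖F u‖ := hFu.symm
        _ = ‖y + (F u - y)‖ := by rw [hsum]
        _ ≤ ‖y‖ + ‖F u - y‖ := norm_add_le _ _
      linarith
    have hray : SameRay ℝ y (F u - y) :=
      (sameRay_iff_norm_add).mpr htri
    have hyna : ‖y‖ = a := by
      have : (1:ℝ) ≤ ‖y‖ + (1 - a) := by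
        calc (1:ℝ) = ‖F u‖ := hFu.symm
        _ = ‖y + (F u - y)‖ := by rw [show y + (F u - y) = F u by abel]
        _ ≤ ‖y‖ + ‖F u - y‖ := norm_add_le _ _
        _ ≤ ‖y‖ + (1 - a) := by linarith
      linarith
    have hfyna : ‖F u - y‖ = 1 - a := by
      have := htri
      rw [show y + (F u - y) = F u by abel, hFu, hyna] at this
      linarith
    have hsm : ‖y‖ • (F u - y) = ‖F u - y‖ • y := hray.norm_smul_eq
    rw [hyna, hfyna] at hsm
    -- a • (F u - y) = (1 - a) • y  ⇒  a • F u = y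
    have : a • F u = y := by
      have h' : a • F u - a • y = y - a • y := by
        rw [← smul_sub, hsm, sub_smul, one_smul]
      calc a • F u = (a • F u - a • y) + a • y := by abel
        _ = (y - a • y) + a • y := by rw [h']
        _ = y := by abel
    exact this.symm
  -- Step 3 : F maps the sphere to the sphere
  have hsph : ∀ x : X, ‖x‖ = 1 → ‖F x‖ = 1 := by
    intro x hx
    have hxB : x ∈ closedBall (0 : X) 1 := by rw [mem_closedBall_zero_iff, hx]
    have hFxB : ‖F x‖ ≤ 1 := mem_closedBall_zero_iff.mp (hbij.mapsTo hxB)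
    by_contra h
    have hlt : ‖F x‖ < 1 := lt_of_le_of_ne hFxB h
    by_cases h0 : F x = 0
    · have : x = 0 := hbij.injOn hxB h0X (by rw [h0, hF0])
      rw [this, norm_zero] at hx; norm_num at hx
    · have hnv : 0 < ‖F x‖ := norm_pos_iff.mpr h0
      set z : Y := ‖F x‖⁻¹ • F x with hz
      have hzn : ‖z‖ = 1 := by
        rw [hz, norm_smul, norm_inv, norm_norm, inv_mul_cancel₀ (ne_of_gt hnv)]
      have hzB : z ∈ closedBall (0 : Y) 1 := by rw [mem_closedBall_zero_iff, hzn]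
      obtain ⟨u, huB, huz⟩ := hbij.surjOn hzB
      have hun : ‖u‖ = 1 := by
        have h1 : ‖F u - F 0‖ ≤ ‖u - 0‖ := hne u huB 0 h0X
        rw [hF0, sub_zero, sub_zero, huz, hzn] at h1
        exact le_antisymm (mem_closedBall_zero_iff.mp huB) h1
      have := key u hun (by rw [huz, hzn]) ‖F x‖ hnv hlt
      rw [huz] at this
      have hvz : ‖F x‖ • z = F x := by
        rw [hz, smul_smul, mul_inv_cancel₀ (ne_of_gt hnv), one_smul]
      rw [hvz] at this
      have hmem : ‖F x‖ • u ∈ closedBall (0 : X) 1 := by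
        rw [mem_closedBall_zero_iff, norm_smul, hun, mul_one, norm_norm]
        exact hFxB
      have : ‖F x‖ • u = x := hbij.injOn hmem hxB this
      have : ‖‖F x‖ • u‖ = 1 := by rw [this, hx]
      rw [norm_smul, hun, mul_one, norm_norm] at this
      rw [this] at hlt; norm_num at hlt
  intro x hx a ha
  rw [mem_sphere_zero_iff_norm] at hx
  exact key x hx (hsph x hx) a ha.1 ha.2
end

section
/- Let X be a real Banach space, Y a strictly convex real Banach space, and let F : B_X → B_Y be a non-expansive bijection from the closed unit ball of X onto the closed unit ball of Y. Then F(−x) = −F(x) for every x ∈ S_X. -/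
open Metric Set

/-- Strict convexity pinch: if `‖y‖ = 1` and `c` is within distance `1` of both `y` and `-y`,
then `c = 0`. -/
private lemma pinch_aux {Y : Type*} [NormedAddCommGroup Y] [NormedSpace ℝ Y]
    [StrictConvexSpace ℝ Y] {c y : Y} (hy : ‖y‖ = 1)
    (h1 : ‖y - c‖ ≤ 1) (h2 : ‖y + c‖ ≤ 1) : c = 0 := by
  have hsum : ‖(y - c) + (y + c)‖ = 2 := by
    have h : (y - c) + (y + c) = (2:ℝ) • y := by module
    rw [h, norm_smul, hy]
    norm_num
  have hge : (2:ℝ) ≤ ‖y - c‖ + ‖y + c‖ := by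
    calc (2:ℝ) = ‖(y - c) + (y + c)‖ := hsum.symm
    _ ≤ ‖y - c‖ + ‖y + c‖ := norm_add_le _ _
  have e1 : ‖y - c‖ = 1 := le_antisymm h1 (by linarith)
  have e2 : ‖y + c‖ = 1 := le_antisymm h2 (by linarith)
  have heq : y - c = y + c :=
    eq_of_norm_eq_of_norm_add_eq (by rw [e1, e2]) (by rw [hsum, e1, e2]; norm_num)
  have : c + c = 0 := by
    have := sub_eq_zero.mpr heq
    have h' : (y - c) - (y + c) = -(c + c) := by module
    rw [h', neg_eq_zero] at this
    exact this
  have h2c : (2:ℝ) • c = 0 := by rw [two_smul]; exact this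
  have := smul_eq_zero.mp h2c
  rcases this with h | h
  · norm_num at h
  · exact h

theorem nonexpansive_bijection_strictly_convex_odd_on_sphere
    {X Y : Type*} [NormedAddCommGroup X] [NormedSpace ℝ X] [CompleteSpace X]
    [NormedAddCommGroup Y] [NormedSpace ℝ Y] [CompleteSpace Y]
    [StrictConvexSpace ℝ Y]
    (F : X → Y)
    (hbij : Set.BijOn F (closedBall (0 : X) 1) (closedBall (0 : Y) 1))
    (hne : ∀ x ∈ closedBall (0 : X) 1, ∀ y ∈ closedBall (0 : X) 1,
      ‖F x - F y‖ ≤ ‖x - y‖) :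
    ∀ x ∈ sphere (0 : X) 1, F (-x) = -F x := by
  intro x hxs
  have hx : ‖x‖ = 1 := by simpa using hxs
  have hinj := hbij.injOn
  have hsurj := hbij.surjOn
  have hmem : ∀ z : X, ‖z‖ ≤ 1 → z ∈ closedBall (0:X) 1 := fun z hz => by
    simpa [mem_closedBall_zero_iff] using hz
  have hmemY : ∀ z : Y, ‖z‖ ≤ 1 → z ∈ closedBall (0:Y) 1 := fun z hz => by
    simpa [mem_closedBall_zero_iff] using hz
  have hnorm : ∀ z : X, z ∈ closedBall (0:X) 1 → ‖z‖ ≤ 1 := fun z hz => by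
    simpa [mem_closedBall_zero_iff] using hz
  have hxB : x ∈ closedBall (0:X) 1 := hmem x hx.le
  have hnxB : -x ∈ closedBall (0:X) 1 := hmem _ (by simpa using hx.le)
  have h0B : (0:X) ∈ closedBall (0:X) 1 := hmem 0 (by simp)
  -- `F x ≠ F (-x)`, so `Y` has a unit vector
  have hxne : F x ≠ F (-x) := by
    intro h
    have hxeq : x = -x := hinj hxB hnxB h
    have h2 : ‖x + x‖ = 2 := by
      have h' : x + x = (2:ℝ) • x := by module
      rw [h', norm_smul, hx]; norm_num
    have h0 : x + x = 0 := by nth_rewrite 2 [hxeq]; simp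
    rw [h0, norm_zero] at h2
    norm_num at h2
  obtain ⟨y₀, hy₀⟩ : ∃ y₀ : Y, ‖y₀‖ = 1 := by
    have hd : F x - F (-x) ≠ 0 := sub_ne_zero.mpr hxne
    exact ⟨‖F x - F (-x)‖⁻¹ • (F x - F (-x)), norm_smul_inv_norm hd⟩
  -- key norms for preimages of antipodal unit vectors
  have key : ∀ y : Y, ‖y‖ = 1 → ∀ a ∈ closedBall (0:X) 1, ∀ b ∈ closedBall (0:X) 1,
      F a = y → F b = -y → ‖a‖ = 1 ∧ ‖b‖ = 1 ∧ ‖a - b‖ = 2 := by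
    intro y hy a haB b hbB hfa hfb
    have hyy : ‖y - -y‖ = 2 := by
      have h' : y - -y = (2:ℝ) • y := by module
      rw [h', norm_smul, hy]; norm_num
    have h2 : (2:ℝ) ≤ ‖a - b‖ := by
      have h := hne a haB b hbB
      rw [hfa, hfb, hyy] at h
      exact h
    have hab : ‖a - b‖ ≤ ‖a‖ + ‖b‖ := norm_sub_le _ _
    have ha1 := hnorm a haB
    have hb1 := hnorm b hbB
    refine ⟨by linarith, by linarith, le_antisymm (by linarith) h2⟩
  -- F 0 = 0
  have hF0 : F 0 = 0 := by
    obtain ⟨a, haB, hfa⟩ := hsurj (hmemY y₀ hy₀.le)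
    obtain ⟨b, hbB, hfb⟩ := hsurj (hmemY (-y₀) (by simpa using hy₀.le))
    obtain ⟨ha1, hb1, -⟩ := key y₀ hy₀ a haB b hbB hfa hfb
    refine pinch_aux hy₀ ?_ ?_
    · have h := hne a haB 0 h0B
      rw [hfa] at h
      simp only [sub_zero] at h
      calc ‖y₀ - F 0‖ = ‖F a - F 0‖ := by rw [hfa]
      _ ≤ ‖a‖ := by simpa using hne a haB 0 h0B
      _ = 1 := ha1
    · calc ‖y₀ + F 0‖ = ‖F b - F 0‖ := by rw [hfb]; rw [norm_sub_rev]; congr 1; abel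
      _ ≤ ‖b‖ := by simpa using hne b hbB 0 h0B
      _ = 1 := hb1
  -- oddness at preimages of unit vectors
  have hodd : ∀ y : Y, ‖y‖ = 1 → ∀ a ∈ closedBall (0:X) 1, F a = y →
      ‖a‖ = 1 ∧ F (-a) = -y := by
    intro y hy a haB hfa
    obtain ⟨b, hbB, hfb⟩ := hsurj (hmemY (-y) (by simpa using hy.le))
    obtain ⟨ha1, hb1, hab⟩ := key y hy a haB b hbB hfa hfb
    set m := (1/2 : ℝ) • (a + b) with hm
    have hmB : m ∈ closedBall (0:X) 1 := by
      refine hmem _ ?_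
      rw [hm, norm_smul]
      have := norm_add_le a b
      rw [ha1, hb1] at this
      rw [Real.norm_eq_abs, abs_of_pos (by norm_num : (0:ℝ) < 1/2)]
      linarith
    have hFm : F m = 0 := by
      refine pinch_aux hy ?_ ?_
      · have hma : m - a = (1/2 : ℝ) • (b - a) := by rw [hm]; module
        calc ‖y - F m‖ = ‖F m - F a‖ := by rw [hfa, norm_sub_rev]
        _ ≤ ‖m - a‖ := hne m hmB a haB
        _ = (1/2) * ‖b - a‖ := by
            rw [hma, norm_smul]; norm_num
        _ = 1 := by rw [norm_sub_rev, hab]; norm_num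
      · have hmb : m - b = (1/2 : ℝ) • (a - b) := by rw [hm]; module
        calc ‖y + F m‖ = ‖F m - F b‖ := by
              rw [hfb, sub_neg_eq_add, add_comm]
        _ ≤ ‖m - b‖ := hne m hmB b hbB
        _ = (1/2) * ‖a - b‖ := by rw [hmb, norm_smul]; norm_num
        _ = 1 := by rw [hab]; norm_num
    have hm0 : m = 0 := hinj hmB h0B (by rw [hFm, hF0])
    have hba : b = -a := by
      have h' : a + b = 0 := by
        have := hm0
        rw [hm] at this
        rcases smul_eq_zero.mp this with h | h
        · norm_num at h
        · exact h
      exact eq_neg_of_add_eq_zero_right h'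
    exact ⟨ha1, by rw [← hba]; exact hfb⟩
  -- radial: F (t • a) = t • y for preimages of unit vectors
  have hradial : ∀ y : Y, ‖y‖ = 1 → ∀ a ∈ closedBall (0:X) 1, F a = y →
      ∀ t : ℝ, 0 ≤ t → t ≤ 1 → F (t • a) = t • y := by
    intro y hy a haB hfa t ht0 ht1
    obtain ⟨ha1, hfna⟩ := hodd y hy a haB hfa
    have hnaB : -a ∈ closedBall (0:X) 1 := hmem _ (by simpa using ha1.le)
    have htaB : t • a ∈ closedBall (0:X) 1 := by
      refine hmem _ ?_
      rw [norm_smul, ha1, mul_one, Real.norm_eq_abs, abs_of_nonneg ht0]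
      exact ht1
    set w := F (t • a) with hw
    have h1 : ‖y - w‖ ≤ 1 - t := by
      have hta : t • a - a = (t - 1) • a := by module
      calc ‖y - w‖ = ‖w - F a‖ := by rw [hfa, norm_sub_rev]
      _ ≤ ‖t • a - a‖ := hne _ htaB a haB
      _ = |t - 1| := by rw [hta, norm_smul, ha1, mul_one, Real.norm_eq_abs]
      _ = 1 - t := by rw [abs_of_nonpos (by linarith)]; ring
    have h2 : ‖y + w‖ ≤ 1 + t := by
      have hta : t • a - -a = (t + 1) • a := by module
      calc ‖y + w‖ = ‖w - F (-a)‖ := by rw [hfna, sub_neg_eq_add, add_comm]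
      _ ≤ ‖t • a - -a‖ := hne _ htaB _ hnaB
      _ = |t + 1| := by rw [hta, norm_smul, ha1, mul_one, Real.norm_eq_abs]
      _ = 1 + t := by rw [abs_of_nonneg (by linarith)]; ring
    have hsum : ‖(y - w) + (y + w)‖ = 2 := by
      have h' : (y - w) + (y + w) = (2:ℝ) • y := by module
      rw [h', norm_smul, hy]; norm_num
    have hge : (2:ℝ) ≤ ‖y - w‖ + ‖y + w‖ := by
      calc (2:ℝ) = ‖(y - w) + (y + w)‖ := hsum.symm
      _ ≤ _ := norm_add_le _ _
    have e1 : ‖y - w‖ = 1 - t := le_antisymm h1 (by linarith)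
    have e2 : ‖y + w‖ = 1 + t := le_antisymm h2 (by linarith)
    have hsr : SameRay ℝ (y - w) (y + w) := by
      rw [sameRay_iff_norm_add, hsum, e1, e2]; ring
    rcases hsr with h | h | ⟨r₁, r₂, hr₁, hr₂, heq⟩
    · -- y - w = 0 : then t = 1
      have hwy : w = y := (sub_eq_zero.mp h).symm
      rw [h, norm_zero] at e1
      have ht : t = 1 := by linarith
      rw [ht, one_smul]
      exact hwy
    · exfalso
      rw [h, norm_zero] at e2
      linarith
    · have hsum2 : (r₁ + r₂) • w = (r₁ - r₂) • y := by
        have h4 : r₁ • w = r₁ • y - (r₂ • y + r₂ • w) := by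
          rw [smul_sub, smul_add] at heq
          rw [← heq]
          abel
        rw [add_smul, sub_smul, h4]
        abel
      have hr12 : r₁ + r₂ ≠ 0 := by positivity
      set s := (r₁ - r₂) / (r₁ + r₂) with hs
      have hws : w = s • y := by
        have h5 := congrArg (fun z => (r₁ + r₂)⁻¹ • z) hsum2
        simp only [smul_smul] at h5
        rw [inv_mul_cancel₀ hr12, one_smul] at h5
        rw [h5, hs]
        rw [div_eq_inv_mul, mul_comm]
      have e1' : |1 - s| = 1 - t := by
        have h6 : y - s • y = (1 - s) • y := by module
        rw [hws, h6, norm_smul, hy, mul_one, Real.norm_eq_abs] at e1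
        exact e1
      have e2' : |1 + s| = 1 + t := by
        have h6 : y + s • y = (1 + s) • y := by module
        rw [hws, h6, norm_smul, hy, mul_one, Real.norm_eq_abs] at e2
        exact e2
      have hst : s = t := by
        have a1 : (1 - s)^2 = (1 - t)^2 := by rw [← sq_abs (1 - s), e1']
        have a2 : (1 + s)^2 = (1 + t)^2 := by rw [← sq_abs (1 + s), e2']
        nlinarith [a1, a2]
      rw [hws, hst]
  -- final step
  have hu1 : ‖F x‖ ≤ 1 := by
    have := hbij.mapsTo hxB
    simpa [mem_closedBall_zero_iff] using this
  have hu0 : F x ≠ 0 := by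
    intro h
    have hx0 : x = 0 := hinj hxB h0B (by rw [h, hF0])
    rw [hx0, norm_zero] at hx
    norm_num at hx
  have hnu : 0 < ‖F x‖ := norm_pos_iff.mpr hu0
  set y := ‖F x‖⁻¹ • F x with hydef
  have hy1 : ‖y‖ = 1 := norm_smul_inv_norm hu0
  obtain ⟨a, haB, hfa⟩ := hsurj (hmemY y hy1.le)
  have hrad := hradial y hy1 a haB hfa ‖F x‖ hnu.le hu1
  have hFy : ‖F x‖ • y = F x := by
    rw [hydef, smul_smul, mul_inv_cancel₀ hnu.ne', one_smul]
  obtain ⟨ha1, hfna⟩ := hodd y hy1 a haB hfa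
  have htaB : ‖F x‖ • a ∈ closedBall (0:X) 1 := by
    refine hmem _ ?_
    rw [norm_smul, ha1, mul_one, Real.norm_eq_abs, abs_of_pos hnu]
    exact hu1
  have hxa : x = ‖F x‖ • a := hinj hxB htaB (by rw [hrad, hFy])
  have ht1 : ‖F x‖ = 1 := by
    have h7 := congrArg norm hxa
    rw [hx, norm_smul, ha1, mul_one, Real.norm_eq_abs, abs_of_pos hnu] at h7
    exact h7.symm
  have hxa2 : x = a := by rw [hxa, ht1, one_smul]
  have hyFx : y = F x := by rw [hydef, ht1, inv_one, one_smul]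
  rw [← hxa2] at hfna
  rw [hfna, hyFx]
end

section
/- Let X and Y be real Banach spaces and let F : B_X → B_Y be a non-expansive bijection from the closed unit ball of X onto the closed unit ball of Y. Suppose u ∈ S_X and v ∈ B_X are such that u*(−v) = −u*(v), ‖F(u)‖ = ‖u‖, and F(a·v) = a·F(v) for all a ∈ [−1, 1]. Then (F(u))*(F(v)) = u*(v). -/
open Metric Set Filter Topology

/-- The one-sided directional derivative of the norm at `u` in direction `v`:
`u*(v) = lim_{a → 0⁺} (‖u + a • v‖ - ‖u‖) / a`. The limit exists by convexity
of the norm, so `limUnder` picks out exactly this limit. -/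
noncomputable def dirDeriv {X : Type*} [NormedAddCommGroup X] [NormedSpace ℝ X]
    (u v : X) : ℝ :=
  Filter.limUnder (nhdsWithin (0 : ℝ) (Set.Ioi 0))
    (fun a : ℝ => (‖u + a • v‖ - ‖u‖) / a)

lemma dirDeriv_quot_mono {X : Type*} [NormedAddCommGroup X] [NormedSpace ℝ X]
    (u v : X) : MonotoneOn (fun a : ℝ => (‖u + a • v‖ - ‖u‖) / a) (Ioi (0:ℝ)) := by
  intro a ha b hb hab
  simp only [mem_Ioi] at ha hb
  have key : ‖u + a • v‖ ≤ (1 - a/b) * ‖u‖ + (a/b) * ‖u + b • v‖ := by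
    have hrepr : u + a • v = (1 - a/b) • u + (a/b) • (u + b • v) := by
      have : (a/b) * b = a := div_mul_cancel₀ a hb.ne'
      rw [smul_add, smul_smul, this]
      module
    calc ‖u + a • v‖ = ‖(1 - a/b) • u + (a/b) • (u + b • v)‖ := by rw [hrepr]
      _ ≤ ‖(1 - a/b) • u‖ + ‖(a/b) • (u + b • v)‖ := norm_add_le _ _
      _ = (1 - a/b) * ‖u‖ + (a/b) * ‖u + b • v‖ := by
          rw [norm_smul, norm_smul, Real.norm_eq_abs, Real.norm_eq_abs,
            abs_of_nonneg (show (0:ℝ) ≤ 1 - a/b by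
              rw [sub_nonneg]; exact div_le_one_of_le₀ hab hb.le),
            abs_of_nonneg (show (0:ℝ) ≤ a/b by positivity)]
  have : ‖u + a • v‖ - ‖u‖ ≤ (a/b) * (‖u + b • v‖ - ‖u‖) := by
    have := key; nlinarith [div_pos ha hb]
  rw [div_le_div_iff₀ ha hb]
  calc (‖u + a • v‖ - ‖u‖) * b ≤ (a/b) * (‖u + b • v‖ - ‖u‖) * b := by
        exact mul_le_mul_of_nonneg_right this hb.le
    _ = (‖u + b • v‖ - ‖u‖) * a := by field_simp

lemma dirDeriv_quot_bddBelow {X : Type*} [NormedAddCommGroup X] [NormedSpace ℝ X]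
    (u v : X) (a : ℝ) (ha : a ∈ Ioi (0:ℝ)) :
    -‖v‖ ≤ (‖u + a • v‖ - ‖u‖) / a := by
  simp only [mem_Ioi] at ha
  rw [le_div_iff₀ ha]
  have h1 : ‖u‖ - ‖a • v‖ ≤ ‖u + a • v‖ := by
    have := norm_sub_norm_le u (-(a • v))
    simpa [sub_neg_eq_add] using this
  have h2 : ‖a • v‖ = a * ‖v‖ := by
    rw [norm_smul, Real.norm_eq_abs, abs_of_pos ha]
  nlinarith

lemma dirDeriv_tendsto {X : Type*} [NormedAddCommGroup X] [NormedSpace ℝ X]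
    (u v : X) : Tendsto (fun a : ℝ => (‖u + a • v‖ - ‖u‖) / a)
      (nhdsWithin (0 : ℝ) (Set.Ioi 0)) (𝓝 (dirDeriv u v)) := by
  have hmono := dirDeriv_quot_mono u v
  have hbdd : BddBelow ((fun a : ℝ => (‖u + a • v‖ - ‖u‖) / a) '' Ioi (0:ℝ)) := by
    refine ⟨-‖v‖, ?_⟩
    rintro x ⟨a, ha, rfl⟩
    exact dirDeriv_quot_bddBelow u v a ha
  have h := hmono.tendsto_nhdsGT hbdd
  have : dirDeriv u v = sInf ((fun a : ℝ => (‖u + a • v‖ - ‖u‖) / a) '' Ioi (0:ℝ)) :=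
    h.limUnder_eq
  rwa [this]

lemma neg_dirDeriv_le {X : Type*} [NormedAddCommGroup X] [NormedSpace ℝ X]
    (u v : X) : -dirDeriv u v ≤ dirDeriv u (-v) := by
  refine le_of_tendsto_of_tendsto ((dirDeriv_tendsto u v).neg)
    (dirDeriv_tendsto u (-v)) ?_
  filter_upwards [self_mem_nhdsWithin] with a (ha : a ∈ Ioi (0:ℝ))
  simp only [mem_Ioi] at ha
  rw [← neg_div]
  have : 2 * ‖u‖ ≤ ‖u + a • v‖ + ‖u + a • (-v)‖ := by
    have h := norm_add_le (u + a • v) (u + a • (-v))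
    have he : (u + a • v) + (u + a • (-v)) = u + u := by module
    rw [he] at h
    calc 2 * ‖u‖ = ‖u + u‖ := by rw [← two_smul ℝ u, norm_smul]; simp
      _ ≤ _ := h
  gcongr
  linarith

lemma dirDeriv_le_of_quot_le {X Y : Type*} [NormedAddCommGroup X] [NormedSpace ℝ X]
    [NormedAddCommGroup Y] [NormedSpace ℝ Y] (u v : X) (w z : Y)
    (h : ∀ a : ℝ, a ∈ Ioo (0:ℝ) 1 →
      (‖w + a • z‖ - ‖w‖) / a ≤ (‖u + a • v‖ - ‖u‖) / a) :
    dirDeriv w z ≤ dirDeriv u v := by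
  refine le_of_tendsto_of_tendsto (dirDeriv_tendsto w z) (dirDeriv_tendsto u v) ?_
  filter_upwards [Ioo_mem_nhdsGT_of_mem (by norm_num : (0:ℝ) ∈ Ico (0:ℝ) 1)] with a ha
  exact h a ha

theorem nonexpansive_bijection_directional_derivative_eq
    {X Y : Type*} [NormedAddCommGroup X] [NormedSpace ℝ X] [CompleteSpace X]
    [NormedAddCommGroup Y] [NormedSpace ℝ Y] [CompleteSpace Y]
    (F : X → Y)
    (hbij : Set.BijOn F (closedBall (0 : X) 1) (closedBall (0 : Y) 1))
    (hne : ∀ x ∈ closedBall (0 : X) 1, ∀ y ∈ closedBall (0 : X) 1,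
      ‖F x - F y‖ ≤ ‖x - y‖)
    (u : X) (hu : u ∈ sphere (0 : X) 1)
    (v : X) (hv : v ∈ closedBall (0 : X) 1)
    (hodd : dirDeriv u (-v) = -dirDeriv u v)
    (hnormFu : ‖F u‖ = ‖u‖)
    (hhom : ∀ a ∈ Set.Icc (-1 : ℝ) 1, F (a • v) = a • F v) :
    dirDeriv (F u) (F v) = dirDeriv u v := by
  rw [mem_sphere_zero_iff_norm] at hu
  rw [mem_closedBall_zero_iff] at hv
  have huball : u ∈ closedBall (0 : X) 1 := by
    rw [mem_closedBall_zero_iff, hu]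
  have hsmul : ∀ a : ℝ, a ∈ Icc (-1:ℝ) 1 → a • v ∈ closedBall (0 : X) 1 := by
    intro a ha
    rw [mem_closedBall_zero_iff, norm_smul, Real.norm_eq_abs]
    rcases ha with ⟨h1, h2⟩
    have : |a| ≤ 1 := abs_le.mpr ⟨h1, h2⟩
    nlinarith [norm_nonneg v, abs_nonneg a]
  have h1 : dirDeriv (F u) (F v) ≤ dirDeriv u v := by
    apply dirDeriv_le_of_quot_le
    rintro a ⟨ha0, ha1⟩
    have hbmem : (-a) ∈ Icc (-1:ℝ) 1 := ⟨by linarith, by linarith⟩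
    have hne' := hne u huball ((-a) • v) (hsmul _ hbmem)
    rw [hhom (-a) hbmem] at hne'
    have hq : ‖F u + a • F v‖ ≤ ‖u + a • v‖ := by
      simpa [neg_smul, sub_neg_eq_add] using hne'
    rw [hnormFu]
    gcongr
  have h2 : dirDeriv (F u) (-(F v)) ≤ dirDeriv u (-v) := by
    apply dirDeriv_le_of_quot_le
    rintro a ⟨ha0, ha1⟩
    have hbmem : a ∈ Icc (-1:ℝ) 1 := ⟨by linarith, by linarith⟩
    have hne' := hne u huball (a • v) (hsmul _ hbmem)
    rw [hhom a hbmem] at hne'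
    have hq : ‖F u + a • (-(F v))‖ ≤ ‖u + a • (-v)‖ := by
      simpa [smul_neg, sub_eq_add_neg] using hne'
    rw [hnormFu]
    gcongr
  have h3 := neg_dirDeriv_le (F u) (F v)
  rw [hodd] at h2
  linarith
end

section
/- Let X and Y be real Banach spaces and let F : B_X → B_Y be a non-expansive bijection with F(S_X) = S_Y. Let V ⊆ S_X be a set such that F(a·v) = a·F(v) for all a ∈ [−1, 1] and all v ∈ V, and set A = { t·x : x ∈ V, t ∈ [−1, 1] }. Then the restriction of F to A is a bijective isometry between A and F(A); that is, ‖F(y₁) − F(y₂)‖ = ‖y₁ − y₂‖ for all y₁, y₂ ∈ A. -/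
set_option maxHeartbeats 1000000

open Metric Set

lemma key_ineq {X Y : Type*} [NormedAddCommGroup X] [NormedSpace ℝ X]
    [NormedAddCommGroup Y] [NormedSpace ℝ Y]
    (F : X → Y)
    (hne' : ∀ p q : X, ‖p‖ ≤ 1 → ‖q‖ ≤ 1 → ‖F p - F q‖ ≤ ‖p - q‖)
    (hnp : ∀ p : X, ‖p‖ ≤ 1 → ‖F p‖ = ‖p‖)
    (v w : X) (hv1 : ‖v‖ = 1) (hw1 : ‖w‖ = 1)
    (hv : ∀ a : ℝ, |a| ≤ 1 → F (a • v) = a • F v)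
    (hw : ∀ a : ℝ, |a| ≤ 1 → F (a • w) = a • F w)
    (b : ℝ) (hb0 : 0 < b) (hb1 : b ≤ 1) :
    ‖v - b • w‖ ≤ ‖F v - b • F w‖ := by
  obtain ⟨e, he⟩ : ∃ e : X, e = v + b • w := ⟨_, rfl⟩
  obtain ⟨h, hh⟩ : ∃ h : ℝ → ℝ, h = fun t => ‖v - t • e‖ := ⟨_, rfl⟩
  have hcont : Continuous h := by
    rw [hh]; exact (continuous_const.sub (continuous_id.smul continuous_const)).norm
  have hchi : ‖v - b • w‖ = 2 * h (2⁻¹:ℝ) := by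
    have h1 : v - (2⁻¹:ℝ) • e = (2⁻¹:ℝ) • (v - b • w) := by rw [he]; module
    have h2 : h (2⁻¹:ℝ) = 2⁻¹ * ‖v - b • w‖ := by
      rw [hh]; simp only; rw [h1, norm_smul]; norm_num
    rw [h2]; ring
  have henorm : ‖e‖ ≤ 2 := by
    rw [he]
    calc ‖v + b • w‖ ≤ ‖v‖ + ‖b • w‖ := norm_add_le _ _
    _ ≤ 2 := by rw [hv1, norm_smul, hw1, Real.norm_eq_abs, abs_of_pos hb0]; linarith
  have hlip : ∀ t u : ℝ, h t - h u ≤ (u - t) * 2 ∨ True := fun _ _ => Or.inr trivial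
  refine le_of_forall_pos_le_add ?_
  intro ε hε
  -- slopes toward 1/2
  obtain ⟨sl, hsl⟩ : ∃ sl : ℝ → ℝ, sl = fun t => (h (2⁻¹:ℝ) - h t) / (2⁻¹ - t) := ⟨_, rfl⟩
  obtain ⟨S, hS⟩ : ∃ S : Set ℝ, S = sl '' Ioo (0:ℝ) 2⁻¹ := ⟨_, rfl⟩
  have hSne : S.Nonempty := by
    rw [hS]; exact ⟨sl 4⁻¹, ⟨4⁻¹, by norm_num, rfl⟩⟩
  have hSbdd : BddAbove S := by
    rw [hS]
    refine ⟨2, ?_⟩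
    rintro y ⟨t, ht, rfl⟩
    have ht2 : (0:ℝ) < 2⁻¹ - t := by linarith [ht.2]
    rw [hsl]
    simp only
    rw [div_le_iff₀ ht2]
    have h1 : h (2⁻¹:ℝ) - h t ≤ ‖(t - 2⁻¹) • e‖ := by
      rw [hh]
      calc ‖v - (2⁻¹:ℝ) • e‖ - ‖v - t • e‖ ≤ ‖(v - (2⁻¹:ℝ) • e) - (v - t • e)‖ :=
        norm_sub_norm_le _ _
      _ = ‖(t - 2⁻¹) • e‖ := by congr 1; module
    have h2 : ‖(t - 2⁻¹) • e‖ ≤ (2⁻¹ - t) * 2 := by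
      rw [norm_smul, Real.norm_eq_abs, abs_of_neg (by linarith : t - 2⁻¹ < 0)]
      nlinarith
    linarith
  obtain ⟨L, hL⟩ : ∃ L : ℝ, L = sSup S := ⟨_, rfl⟩
  obtain ⟨y, hyS, hy⟩ := exists_lt_of_lt_csSup hSne (show L - ε/2 < sSup S by rw [← hL]; linarith)
  rw [hS] at hyS
  obtain ⟨t₀, ht₀, rfl⟩ := hyS
  have ht₀0 : (0:ℝ) < t₀ := ht₀.1
  have ht₀h : t₀ < 2⁻¹ := ht₀.2
  -- continuity pick of s
  obtain ⟨g, hg⟩ : ∃ g : ℝ → ℝ, g = fun r => (h r - h t₀) / (r - t₀) := ⟨_, rfl⟩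
  have hgc : ContinuousAt g (2⁻¹:ℝ) := by
    rw [hg]
    apply ContinuousAt.div
    · exact (hcont.sub continuous_const).continuousAt
    · exact (continuous_id.sub continuous_const).continuousAt
    · intro hc; rw [sub_eq_zero] at hc; exact absurd hc.symm (ne_of_lt ht₀h)
  have hgval : g (2⁻¹:ℝ) = sl t₀ := by rw [hg, hsl]
  have hεpos : 0 < g (2⁻¹:ℝ) - (L - ε) := by rw [hgval]; linarith
  obtain ⟨δ, hδ0, hδp⟩ := Metric.continuousAt_iff.mp hgc (g (2⁻¹:ℝ) - (L - ε)) hεpos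
  obtain ⟨s, hst₀, hs2, hsδ⟩ : ∃ s : ℝ, t₀ < s ∧ s < 2⁻¹ ∧ dist s (2⁻¹:ℝ) < δ := by
    refine ⟨max (2⁻¹ - δ/2) ((t₀ + 2⁻¹)/2), ?_, ?_, ?_⟩
    · exact lt_of_lt_of_le (by linarith) (le_max_right _ _)
    · exact max_lt (by linarith) (by linarith)
    · have h1 : (2⁻¹:ℝ) - δ/2 ≤ max (2⁻¹ - δ/2) ((t₀ + 2⁻¹)/2) := le_max_left _ _
      have h2 : max (2⁻¹ - δ/2) ((t₀ + 2⁻¹)/2) < 2⁻¹ := max_lt (by linarith) (by linarith)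
      rw [Real.dist_eq, abs_of_nonpos (by linarith)]
      linarith
  have hs0 : 0 < s := lt_trans ht₀0 hst₀
  have hgs : g s > L - ε := by
    have h1 := hδp hsδ
    rw [Real.dist_eq] at h1
    have h2 := (abs_lt.mp h1).1
    linarith
  have hK₁ : sl s ≤ L := by
    rw [hL]
    exact le_csSup hSbdd (by rw [hS]; exact ⟨s, ⟨hs0, hs2⟩, rfl⟩)
  have hK : sl s - ε < g s := by linarith
  -- geometry at z
  obtain ⟨z, hz⟩ : ∃ z : X, z = v - s • e := ⟨_, rfl⟩
  have hz1 : ‖z‖ ≤ 1 := by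
    have h1 : z = (1 - s) • v + (s * b) • (-w) := by rw [hz, he]; module
    calc ‖z‖ ≤ ‖(1-s) • v‖ + ‖(s*b) • (-w)‖ := by rw [h1]; exact norm_add_le _ _
    _ = (1-s) + s*b := by
        rw [norm_smul, norm_smul, hv1, norm_neg, hw1, Real.norm_eq_abs, Real.norm_eq_abs,
          abs_of_pos (by linarith : (0:ℝ) < 1 - s), abs_of_pos (by positivity)]
        ring
    _ ≤ 1 := by nlinarith
  have hzn : h s = ‖z‖ := by rw [hh, hz]
  have hzpos : 0 < ‖z‖ := by
    have h7 : ‖s • e‖ ≤ s * 2 := by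
      rw [norm_smul, Real.norm_eq_abs, abs_of_pos hs0]
      nlinarith
    have h8 : ‖v‖ - ‖s • e‖ ≤ ‖z‖ := by rw [hz]; exact norm_sub_norm_le _ _
    rw [hv1] at h8
    linarith
  have hq1 : ‖F z‖ = ‖z‖ := hnp z hz1
  have hqne : F z ≠ 0 := by
    intro h0
    rw [h0, norm_zero] at hq1
    exact absurd hq1.symm hzpos.ne'
  obtain ⟨f, hf1, hfq0⟩ := exists_dual_vector ℝ (F z) (norm_ne_zero_iff.mpr hqne)
  have hfq : f (F z) = h s := by rw [hzn, ← hq1]; exact_mod_cast hfq0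
  -- estimate 1 : v-line
  have hden1 : (2⁻¹:ℝ) - s ≠ 0 := by
    intro hc; rw [sub_eq_zero] at hc; exact absurd hc.symm (ne_of_lt hs2)
  have ha0 : (0:ℝ) < 1 - 2*s := by linarith
  have hFa : F ((1 - 2*s) • v) = (1 - 2*s) • F v := hv _ (by rw [abs_of_pos ha0]; linarith)
  have havball : ‖(1 - 2*s) • v‖ ≤ 1 := by
    rw [norm_smul, hv1, Real.norm_eq_abs, abs_of_pos ha0]; linarith
  have est1 : ‖F z - (1 - 2*s) • F v‖ ≤ 2 * s * h (2⁻¹:ℝ) := by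
    rw [← hFa]
    calc ‖F z - F ((1 - 2*s) • v)‖ ≤ ‖z - (1 - 2*s) • v‖ := hne' z _ hz1 havball
    _ = ‖(2*s) • (v - (2⁻¹:ℝ) • e)‖ := by congr 1; rw [hz]; module
    _ = 2 * s * h (2⁻¹:ℝ) := by
        rw [norm_smul, Real.norm_eq_abs, abs_of_pos (by linarith : (0:ℝ) < 2*s), hh]
  have e1 : h s - s * sl s ≤ f (F v) := by
    have h1 : f (F z) - (1 - 2*s) * f (F v) ≤ 2*s*h (2⁻¹:ℝ) := by
      calc f (F z) - (1 - 2*s) * f (F v) = f (F z - (1 - 2*s) • F v) := by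
            rw [map_sub, map_smul, smul_eq_mul]
      _ ≤ ‖f (F z - (1 - 2*s) • F v)‖ := le_abs_self _
      _ ≤ ‖f‖ * ‖F z - (1 - 2*s) • F v‖ := f.le_opNorm _
      _ = ‖F z - (1 - 2*s) • F v‖ := by rw [hf1, one_mul]
      _ ≤ 2*s*h (2⁻¹:ℝ) := est1
    rw [hfq] at h1
    have hida : (1 - 2*s) * (h s - s * sl s) = h s - 2*s*h (2⁻¹:ℝ) := by
      rw [hsl]
      simp only
      field_simp
      ring
    have h2 : (1 - 2*s) * (h s - s * sl s) ≤ (1 - 2*s) * f (F v) := by linarith [h1, hida]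
    exact le_of_mul_le_mul_left h2 ha0
  -- estimate 2 : w-line
  have hden2 : s - t₀ ≠ 0 := by
    intro hc; rw [sub_eq_zero] at hc; exact absurd hc (ne_of_gt hst₀)
  have hden3 : (1:ℝ) - t₀ ≠ 0 := by
    intro hc; rw [sub_eq_zero] at hc; exact absurd hc.symm (by linarith : t₀ < 1).ne
  obtain ⟨ρ, hρ⟩ : ∃ ρ : ℝ, ρ = (s - t₀)/(1 - t₀) := ⟨_, rfl⟩
  have hρ0 : 0 < ρ := by rw [hρ]; exact div_pos (by linarith) (by linarith)
  have hρ1 : ρ < 1 := by rw [hρ, div_lt_one (by linarith)]; linarith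
  have hβ0 : 0 < b * ρ := mul_pos hb0 hρ0
  have hβ1 : b * ρ ≤ 1 := by nlinarith
  have hFβ : F ((-(b * ρ)) • w) = (-(b * ρ)) • F w :=
    hw _ (by rw [abs_of_neg (by linarith : -(b * ρ) < 0)]; linarith)
  have hβball : ‖(-(b * ρ)) • w‖ ≤ 1 := by
    rw [norm_smul, hw1, Real.norm_eq_abs, abs_of_neg (by linarith : -(b * ρ) < 0)]; linarith
  have hcoef : (1 - ρ) * t₀ = s - ρ := by
    rw [hρ]; field_simp; ring
  have est2 : ‖F z + (b * ρ) • F w‖ ≤ (1 - ρ) * h t₀ := by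
    have heq : F z + (b * ρ) • F w = F z - F ((-(b * ρ)) • w) := by
      rw [hFβ, neg_smul, sub_neg_eq_add]
    rw [heq]
    calc ‖F z - F ((-(b * ρ)) • w)‖ ≤ ‖z - (-(b * ρ)) • w‖ := hne' z _ hz1 hβball
    _ = ‖(1-ρ) • (v - t₀ • e)‖ := by
        congr 1
        have h6 : (1-ρ) • (v - t₀ • e) = (1-ρ) • v - (s - ρ) • e := by
          rw [smul_sub, ← hcoef, smul_smul]
        rw [h6, hz, he]
        module
    _ = (1-ρ) * h t₀ := by
        rw [norm_smul, Real.norm_eq_abs, abs_of_pos (by linarith : (0:ℝ) < 1 - ρ), hh]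
  have e2 : b * f (F w) ≤ -(h s + (1-s) * g s) := by
    have h1 : f (F z) + (b * ρ) * f (F w) ≤ (1-ρ) * h t₀ := by
      calc f (F z) + (b * ρ) * f (F w) = f (F z + (b * ρ) • F w) := by
            rw [map_add, map_smul, smul_eq_mul]
      _ ≤ ‖f (F z + (b * ρ) • F w)‖ := le_abs_self _
      _ ≤ ‖f‖ * ‖F z + (b * ρ) • F w‖ := f.le_opNorm _
      _ = ‖F z + (b * ρ) • F w‖ := by rw [hf1, one_mul]
      _ ≤ (1-ρ) * h t₀ := est2
    rw [hfq] at h1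
    have hidb : ρ * (h s + (1-s) * g s) = h s - (1-ρ) * h t₀ := by
      rw [hρ, hg]
      simp only
      field_simp
      ring
    have h2 : ρ * (b * f (F w)) ≤ ρ * (-(h s + (1-s) * g s)) := by
      have hb3 : ρ * (-(h s + (1-s) * g s)) = (1-ρ) * h t₀ - h s := by linarith [hidb]
      rw [hb3]
      nlinarith [h1]
    exact le_of_mul_le_mul_left h2 hρ0
  -- final arithmetic
  have hfinal : f (F v) - b * f (F w) ≤ ‖F v - b • F w‖ := by
    calc f (F v) - b * f (F w) = f (F v - b • F w) := by rw [map_sub, map_smul, smul_eq_mul]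
    _ ≤ ‖f (F v - b • F w)‖ := le_abs_self _
    _ ≤ ‖f‖ * ‖F v - b • F w‖ := f.le_opNorm _
    _ = ‖F v - b • F w‖ := by rw [hf1, one_mul]
  have hid3 : (1 - 2*s) * sl s = 2*(h (2⁻¹:ℝ) - h s) := by
    rw [hsl]
    simp only
    field_simp
  have e4 : (1-s) * (sl s - ε) ≤ (1-s) * g s :=
    mul_le_mul_of_nonneg_left hK.le (by linarith : (0:ℝ) ≤ 1 - s)
  have c1 : 2 * h s - s * sl s + (1-s) * g s ≤ f (F v) - b * f (F w) := by linarith [e1, e2]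
  have expand : (1-s) * (sl s - ε) = (1-s) * sl s - (1-s) * ε := by ring
  have c3 : (1-s) * ε ≤ ε := by nlinarith [mul_nonneg hs0.le hε.le]
  have c4 : 2*h s - s*sl s + (1-s)*sl s = 2*h s + (1 - 2*s)*sl s := by ring
  have hfin2 : 2 * h (2⁻¹:ℝ) - ε ≤ f (F v) - b * f (F w) := by
    linarith [c1, e4, expand, c3, c4, hid3]
  rw [hchi]
  linarith [hfinal, hfin2]
theorem nonexpansive_bijection_isometry_on_symmetric_cone
    {X Y : Type*} [NormedAddCommGroup X] [NormedSpace ℝ X] [CompleteSpace X]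
    [NormedAddCommGroup Y] [NormedSpace ℝ Y] [CompleteSpace Y]
    (F : X → Y)
    (hbij : Set.BijOn F (closedBall (0 : X) 1) (closedBall (0 : Y) 1))
    (hne : ∀ x ∈ closedBall (0 : X) 1, ∀ y ∈ closedBall (0 : X) 1,
      ‖F x - F y‖ ≤ ‖x - y‖)
    (hsph : F '' sphere (0 : X) 1 = sphere (0 : Y) 1)
    (V : Set X) (hV : V ⊆ sphere (0 : X) 1)
    (hhom : ∀ v ∈ V, ∀ a ∈ Set.Icc (-1 : ℝ) 1, F (a • v) = a • F v)
    (A : Set X) (hA : A = {y : X | ∃ x ∈ V, ∃ t ∈ Set.Icc (-1 : ℝ) 1, y = t • x}) :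
    ∀ y₁ ∈ A, ∀ y₂ ∈ A, ‖F y₁ - F y₂‖ = ‖y₁ - y₂‖ := by
  have hne' : ∀ p q : X, ‖p‖ ≤ 1 → ‖q‖ ≤ 1 → ‖F p - F q‖ ≤ ‖p - q‖ := fun p q hp hq =>
    hne p (mem_closedBall_zero_iff.mpr hp) q (mem_closedBall_zero_iff.mpr hq)
  intro y₁ hy₁ y₂ hy₂
  rw [hA] at hy₁ hy₂
  obtain ⟨x₁, hx₁, t₁, ht₁, rfl⟩ := hy₁
  obtain ⟨x₂, hx₂, t₂, ht₂, rfl⟩ := hy₂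
  have hx₁n : ‖x₁‖ = 1 := mem_sphere_zero_iff_norm.mp (hV hx₁)
  have hx₂n : ‖x₂‖ = 1 := mem_sphere_zero_iff_norm.mp (hV hx₂)
  have hhom₁ : ∀ a : ℝ, |a| ≤ 1 → F (a • x₁) = a • F x₁ := fun a ha =>
    hhom x₁ hx₁ a (mem_Icc.mpr (abs_le.mp ha))
  have hhom₂ : ∀ a : ℝ, |a| ≤ 1 → F (a • x₂) = a • F x₂ := fun a ha =>
    hhom x₂ hx₂ a (mem_Icc.mpr (abs_le.mp ha))
  have hF0 : F 0 = 0 := by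
    have h0 := hhom₁ 0 (by norm_num)
    simpa using h0
  -- norm preservation
  have hnp : ∀ p : X, ‖p‖ ≤ 1 → ‖F p‖ = ‖p‖ := by
    intro p hp
    apply le_antisymm
    · have h1 := hne' p 0 hp (by simp)
      rw [hF0, sub_zero, sub_zero] at h1
      exact h1
    · rcases eq_or_ne p 0 with rfl | hp0
      · simp [hF0]
      · have hpn : 0 < ‖p‖ := norm_pos_iff.mpr hp0
        have hun : ‖(‖p‖⁻¹ • p)‖ = 1 := by
          rw [norm_smul, Real.norm_eq_abs, abs_of_pos (inv_pos.mpr hpn)]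
          field_simp
        have hFu : ‖F (‖p‖⁻¹ • p)‖ = 1 := by
          have humem : (‖p‖⁻¹ • p) ∈ sphere (0:X) 1 := mem_sphere_zero_iff_norm.mpr hun
          have h2 : F (‖p‖⁻¹ • p) ∈ sphere (0:Y) 1 := by
            rw [← hsph]; exact mem_image_of_mem F humem
          exact mem_sphere_zero_iff_norm.mp h2
        have hdist : ‖F p - F (‖p‖⁻¹ • p)‖ ≤ 1 - ‖p‖ := by
          have h3 := hne' p (‖p‖⁻¹ • p) hp (le_of_eq hun)
          have h4 : ‖p - ‖p‖⁻¹ • p‖ = 1 - ‖p‖ := by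
            have h5 : p - ‖p‖⁻¹ • p = (1 - ‖p‖⁻¹) • p := by
              rw [sub_smul, one_smul]
            rw [h5, norm_smul, Real.norm_eq_abs]
            rw [abs_of_nonpos (by
              have : (1:ℝ) ≤ ‖p‖⁻¹ := (one_le_inv₀ hpn).mpr hp
              linarith)]
            field_simp
            ring
          rw [h4] at h3; exact h3
        have h6 : ‖F (‖p‖⁻¹ • p)‖ - ‖F p‖ ≤ ‖F p - F (‖p‖⁻¹ • p)‖ := by
          rw [norm_sub_rev]; exact norm_sub_norm_le _ _
        rw [hFu] at h6
        linarith
  -- rewrite goal via homogeneity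
  rw [hhom x₁ hx₁ t₁ ht₁, hhom x₂ hx₂ t₂ ht₂]
  have ht₁a : |t₁| ≤ 1 := abs_le.mpr (mem_Icc.mp ht₁)
  have ht₂a : |t₂| ≤ 1 := abs_le.mpr (mem_Icc.mp ht₂)
  -- the hard inequality, symmetric version
  have main : ∀ (u₁ u₂ : X) (r₁ r₂ : ℝ), ‖u₁‖ = 1 → ‖u₂‖ = 1 →
      (∀ a : ℝ, |a| ≤ 1 → F (a • u₁) = a • F u₁) →
      (∀ a : ℝ, |a| ≤ 1 → F (a • u₂) = a • F u₂) →
      |r₁| ≤ 1 → |r₂| ≤ |r₁| → ‖r₁ • u₁ - r₂ • u₂‖ ≤ ‖r₁ • F u₁ - r₂ • F u₂‖ := by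
    intro u₁ u₂ r₁ r₂ hu₁ hu₂ hh₁ hh₂ hr₁ hr₂₁
    rcases eq_or_ne r₁ 0 with rfl | hr₁0
    · have hr₂ : r₂ = 0 := by
        have := le_antisymm (by simpa using hr₂₁) (abs_nonneg r₂)
        exact abs_eq_zero.mp this
      subst hr₂; simp
    rcases eq_or_ne r₂ 0 with rfl | hr₂0
    · simp only [zero_smul, sub_zero, norm_smul, hnp u₁ (le_of_eq hu₁), le_refl]
    -- general case
    have hτ0 : 0 < |r₁| := abs_pos.mpr hr₁0
    have hτ20 : 0 < |r₂| := abs_pos.mpr hr₂0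
    have hσ₁ : |r₁ / abs r₁| = 1 := by rw [abs_div, abs_abs, div_self hτ0.ne']
    have hσ₂ : |r₂ / abs r₂| = 1 := by rw [abs_div, abs_abs, div_self hτ20.ne']
    have hFv : F ((r₁ / |r₁|) • u₁) = (r₁ / |r₁|) • F u₁ := hh₁ _ (le_of_eq hσ₁)
    have hFw : F ((r₂ / |r₂|) • u₂) = (r₂ / |r₂|) • F u₂ := hh₂ _ (le_of_eq hσ₂)
    have hvhom : ∀ a : ℝ, |a| ≤ 1 → F (a • ((r₁ / |r₁|) • u₁)) = a • F ((r₁ / |r₁|) • u₁) := by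
      intro a ha
      rw [smul_smul, hh₁ (a * (r₁ / |r₁|)) (by rw [abs_mul, hσ₁, mul_one]; exact ha), hFv,
        smul_smul]
    have hwhom : ∀ a : ℝ, |a| ≤ 1 → F (a • ((r₂ / |r₂|) • u₂)) = a • F ((r₂ / |r₂|) • u₂) := by
      intro a ha
      rw [smul_smul, hh₂ (a * (r₂ / |r₂|)) (by rw [abs_mul, hσ₂, mul_one]; exact ha), hFw,
        smul_smul]
    have hv1 : ‖(r₁ / |r₁|) • u₁‖ = 1 := by rw [norm_smul, Real.norm_eq_abs, hσ₁, hu₁, mul_one]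
    have hw1 : ‖(r₂ / |r₂|) • u₂‖ = 1 := by rw [norm_smul, Real.norm_eq_abs, hσ₂, hu₂, mul_one]
    have hb0 : 0 < |r₂| / |r₁| := div_pos hτ20 hτ0
    have hb1 : |r₂| / |r₁| ≤ 1 := (div_le_one hτ0).mpr hr₂₁
    have key := key_ineq F hne' hnp ((r₁ / |r₁|) • u₁) ((r₂ / |r₂|) • u₂) hv1 hw1 hvhom hwhom
      (|r₂| / |r₁|) hb0 hb1
    -- scaling identities
    have hx1 : r₁ • u₁ = |r₁| • ((r₁ / |r₁|) • u₁) := by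
      rw [smul_smul]; congr 1; field_simp
    have hx2 : r₂ • u₂ = (|r₁| * (|r₂| / |r₁|)) • ((r₂ / |r₂|) • u₂) := by
      rw [smul_smul]; congr 1; field_simp
    have hy1 : r₁ • F u₁ = |r₁| • ((r₁ / |r₁|) • F u₁) := by
      rw [smul_smul]; congr 1; field_simp
    have hy2 : r₂ • F u₂ = (|r₁| * (|r₂| / |r₁|)) • ((r₂ / |r₂|) • F u₂) := by
      rw [smul_smul]; congr 1; field_simp
    calc ‖r₁ • u₁ - r₂ • u₂‖
        = ‖|r₁| • (((r₁ / |r₁|) • u₁) - (|r₂| / |r₁|) • ((r₂ / |r₂|) • u₂))‖ := by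
          rw [hx1, hx2]; congr 1; module
    _ = |r₁| * ‖((r₁ / |r₁|) • u₁) - (|r₂| / |r₁|) • ((r₂ / |r₂|) • u₂)‖ := by
          rw [norm_smul, Real.norm_eq_abs, abs_abs]
    _ ≤ |r₁| * ‖F ((r₁ / |r₁|) • u₁) - (|r₂| / |r₁|) • F ((r₂ / |r₂|) • u₂)‖ := by
          exact mul_le_mul_of_nonneg_left key (abs_nonneg r₁)
    _ = ‖r₁ • F u₁ - r₂ • F u₂‖ := by
          rw [hFv, hFw, hy1, hy2, ← norm_smul_of_nonneg (abs_nonneg r₁)]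
          congr 1
          module
  apply le_antisymm
  · rw [← hhom x₁ hx₁ t₁ ht₁, ← hhom x₂ hx₂ t₂ ht₂]
    apply hne'
    · rw [norm_smul, Real.norm_eq_abs, hx₁n, mul_one]; exact ht₁a
    · rw [norm_smul, Real.norm_eq_abs, hx₂n, mul_one]; exact ht₂a
  · rcases le_total |t₂| |t₁| with hc | hc
    · exact main x₁ x₂ t₁ t₂ hx₁n hx₂n hhom₁ hhom₂ ht₁a hc
    · rw [norm_sub_rev, norm_sub_rev (t₁ • F x₁)]
      exact main x₂ x₁ t₂ t₁ hx₂n hx₁n hhom₂ hhom₁ ht₂a hc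
end

section
/- Let X and Y be real Banach spaces and let F : B_X → B_Y be a non-expansive bijection from the closed unit ball of X onto the closed unit ball of Y satisfying: (i) F maps S_X bijectively onto S_Y; (ii) F(a·x) = a·F(x) for all x ∈ S_X and a ∈ (0, 1); (iii) F(−x) = −F(x) for all x ∈ S_X. Then F is an isometry: ‖F(x) − F(y)‖ = ‖x − y‖ for all x, y ∈ B_X. -/
open Metric Set

theorem nonexpansive_bijection_with_homogeneity_is_isometry
    {X Y : Type*} [NormedAddCommGroup X] [NormedSpace ℝ X] [CompleteSpace X]
    [NormedAddCommGroup Y] [NormedSpace ℝ Y] [CompleteSpace Y]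
    (F : X → Y)
    (hbij : Set.BijOn F (closedBall (0 : X) 1) (closedBall (0 : Y) 1))
    (hne : ∀ x ∈ closedBall (0 : X) 1, ∀ y ∈ closedBall (0 : X) 1,
      ‖F x - F y‖ ≤ ‖x - y‖)
    (hsph : Set.BijOn F (sphere (0 : X) 1) (sphere (0 : Y) 1))
    (hhom : ∀ x ∈ sphere (0 : X) 1, ∀ a ∈ Set.Ioo (0 : ℝ) 1, F (a • x) = a • F x)
    (hodd : ∀ x ∈ sphere (0 : X) 1, F (-x) = -F x) :
    ∀ x ∈ closedBall (0 : X) 1, ∀ y ∈ closedBall (0 : X) 1,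
      ‖F x - F y‖ = ‖x - y‖ := by
  -- norm of images of sphere points
  have hFS : ∀ w : X, ‖w‖ = 1 → ‖F w‖ = 1 := by
    intro w hw
    have := hsph.mapsTo (mem_sphere_zero_iff_norm.mpr hw)
    exact mem_sphere_zero_iff_norm.mp this
  intro x hx y hy
  have hx' : ‖x‖ ≤ 1 := mem_closedBall_zero_iff.mp hx
  have hy' : ‖y‖ ≤ 1 := mem_closedBall_zero_iff.mp hy
  by_cases hxy : x = y
  · rw [hxy]; simp
  · set d := ‖x - y‖ with hd_def
    have hd : 0 < d := by
      rw [hd_def]; exact norm_sub_pos_iff.mpr hxy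
    set c : X := d⁻¹ • (x - y) with hc_def
    have hcS : ‖c‖ = 1 := by
      rw [hc_def, norm_smul, Real.norm_eq_abs, abs_inv, abs_of_pos hd, ← hd_def,
        inv_mul_cancel₀ hd.ne']
    -- F 0 = 0
    have hF0 : F 0 = 0 := by
      have h2 : ∀ a : ℝ, 0 < a → a < 1 → ‖F 0‖ ≤ 2 * a := by
        intro a ha0 ha1
        have hcmem : c ∈ sphere (0 : X) 1 := mem_sphere_zero_iff_norm.mpr hcS
        have hFc : F (a • c) = a • F c := hhom c hcmem a ⟨ha0, ha1⟩
        have hmem : a • c ∈ closedBall (0 : X) 1 := by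
          rw [mem_closedBall_zero_iff, norm_smul, Real.norm_eq_abs, abs_of_pos ha0, hcS,
            mul_one]
          exact ha1.le
        have h0mem : (0 : X) ∈ closedBall (0 : X) 1 := by
          rw [mem_closedBall_zero_iff, norm_zero]; norm_num
        have h1 := hne 0 h0mem (a • c) hmem
        have e1 : ‖(0 : X) - a • c‖ = a := by
          rw [zero_sub, norm_neg, norm_smul, Real.norm_eq_abs, abs_of_pos ha0, hcS, mul_one]
        have e2 : ‖F (a • c)‖ = a := by
          rw [hFc, norm_smul, Real.norm_eq_abs, abs_of_pos ha0, hFS c hcS, mul_one]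
        have h4 : ‖F 0‖ ≤ ‖F 0 - F (a • c)‖ + ‖F (a • c)‖ := by
          have := norm_add_le (F 0 - F (a • c)) (F (a • c))
          simpa using this
        rw [e1] at h1
        linarith
      by_contra h0
      have hpos : 0 < ‖F 0‖ := norm_pos_iff.mpr h0
      have hmlt : min (‖F 0‖ / 3) (1 / 2) < 1 := by
        have := min_le_right (‖F 0‖ / 3) (1 / 2); linarith
      have hmpos : 0 < min (‖F 0‖ / 3) (1 / 2) := lt_min (by linarith) (by norm_num)
      have hmin := h2 (min (‖F 0‖ / 3) (1 / 2)) hmpos hmlt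
      have := min_le_left (‖F 0‖ / 3) (1 / 2)
      linarith
    -- homogeneity on the sphere with coefficients in [0,1]
    have homS : ∀ w : X, ‖w‖ = 1 → ∀ a : ℝ, 0 ≤ a → a ≤ 1 → F (a • w) = a • F w := by
      intro w hw a ha0 ha1
      rcases eq_or_lt_of_le ha0 with h0 | h0
      · rw [← h0, zero_smul, zero_smul, hF0]
      · rcases eq_or_lt_of_le ha1 with h1 | h1
        · rw [h1, one_smul, one_smul]
        · exact hhom w (mem_sphere_zero_iff_norm.mpr hw) a ⟨h0, h1⟩
    -- homogeneity on the sphere with coefficients in [-1,1]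
    have homNeg : ∀ w : X, ‖w‖ = 1 → ∀ a : ℝ, |a| ≤ 1 → F (a • w) = a • F w := by
      intro w hw a haabs
      rcases le_or_gt 0 a with ha | ha
      · exact homS w hw a ha (by rwa [abs_of_nonneg ha] at haabs)
      · have hw' : ‖-w‖ = 1 := by rwa [norm_neg]
        have h1 : a • w = (-a) • (-w) := by rw [neg_smul, smul_neg, neg_neg]
        have ha' : -a ≤ 1 := by rwa [abs_of_neg ha] at haabs
        rw [h1, homS (-w) hw' (-a) (by linarith) ha',
          hodd w (mem_sphere_zero_iff_norm.mpr hw), smul_neg, neg_smul, neg_neg]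
    -- homogeneity on the ball with coefficients in [0,1]
    have homB : ∀ p : X, ‖p‖ ≤ 1 → ∀ a : ℝ, 0 ≤ a → a ≤ 1 → F (a • p) = a • F p := by
      intro p hp a ha0 ha1
      by_cases hp0 : p = 0
      · rw [hp0, smul_zero, hF0, smul_zero]
      · have hn : 0 < ‖p‖ := norm_pos_iff.mpr hp0
        have hqS : ‖(‖p‖⁻¹ • p : X)‖ = 1 := by
          rw [norm_smul, Real.norm_eq_abs, abs_inv, abs_of_pos hn, inv_mul_cancel₀ hn.ne']
        have hpq : p = ‖p‖ • (‖p‖⁻¹ • p) := by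
          rw [smul_smul, mul_inv_cancel₀ hn.ne', one_smul]
        have han : 0 ≤ a * ‖p‖ := mul_nonneg ha0 hn.le
        have han1 : a * ‖p‖ ≤ 1 := by nlinarith
        have h1 : F (a • p) = (a * ‖p‖) • F (‖p‖⁻¹ • p) := by
          conv_lhs => rw [hpq]
          rw [smul_smul, homS (‖p‖⁻¹ • p) hqS (a * ‖p‖) han han1]
        have h2 : F p = ‖p‖ • F (‖p‖⁻¹ • p) := by
          conv_lhs => rw [hpq]
          rw [homS (‖p‖⁻¹ • p) hqS ‖p‖ hn.le hp]
        rw [h1, h2, smul_smul]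
    -- the scaled pattern inequality
    have claim : ∀ p : X, ‖p‖ ≤ 1 → ∀ w : X, ‖w‖ = 1 → ∀ β : ℝ,
        ‖F p - β • F w‖ ≤ ‖p - β • w‖ := by
      intro p hp w hw β
      set l : ℝ := (1 + |β|)⁻¹ with hl
      have hlpos : 0 < l := by rw [hl]; positivity
      have hub : l * (1 + |β|) = 1 := by
        rw [hl]; exact inv_mul_cancel₀ (by positivity)
      have hub' : l + l * |β| = 1 := by rw [← hub]; ring
      have hlb : 0 ≤ l * |β| := mul_nonneg hlpos.le (abs_nonneg β)
      have hl1 : l ≤ 1 := by linarith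
      have hlβ : |l * β| ≤ 1 := by
        rw [abs_mul, abs_of_pos hlpos]; linarith
      have hmem1 : l • p ∈ closedBall (0 : X) 1 := by
        rw [mem_closedBall_zero_iff, norm_smul, Real.norm_eq_abs, abs_of_pos hlpos]
        calc l * ‖p‖ ≤ 1 * 1 := mul_le_mul hl1 hp (norm_nonneg p) zero_le_one
          _ = 1 := by norm_num
      have hmem2 : (l * β) • w ∈ closedBall (0 : X) 1 := by
        rw [mem_closedBall_zero_iff, norm_smul, Real.norm_eq_abs, hw, mul_one]
        exact hlβ
      have h1 := hne (l • p) hmem1 ((l * β) • w) hmem2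
      have e1 : F (l • p) = l • F p := homB p hp l hlpos.le hl1
      have e2 : F ((l * β) • w) = (l * β) • F w := homNeg w hw (l * β) hlβ
      rw [e1, e2] at h1
      have e3 : l • F p - (l * β) • F w = l • (F p - β • F w) := by
        rw [smul_sub, smul_smul]
      have e4 : l • p - (l * β) • w = l • (p - β • w) := by
        rw [smul_sub, smul_smul]
      rw [e3, e4, norm_smul, norm_smul, Real.norm_eq_abs, abs_of_pos hlpos] at h1
      exact le_of_mul_le_mul_left h1 hlpos
    -- the key lower bound
    have key : ∀ t : ℝ, 2 / d ≤ t →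
        2 * ‖x + t • (x - y)‖ - t * d - ‖x + t • (x - y) + y‖ ≤ ‖F x - F y‖ := by
      intro t ht
      have htd : 2 ≤ t * d := by
        have := (div_le_iff₀ hd).mp ht; linarith
      have ht0 : 0 ≤ t := le_trans (div_nonneg (by norm_num) hd.le) ht
      set z := x + t • (x - y) with hz
      have hnt : ‖t • (x - y)‖ = t * d := by
        rw [norm_smul, Real.norm_eq_abs, abs_of_nonneg ht0, ← hd_def]
      have hzx : z - x = t • (x - y) := by rw [hz]; abel
      have hz1 : 1 ≤ ‖z‖ := by
        have h2 := norm_sub_le z x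
        rw [hzx, hnt] at h2
        linarith
      have hz0 : 0 < ‖z‖ := by linarith
      have hqS : ‖(‖z‖⁻¹ • z : X)‖ = 1 := by
        rw [norm_smul, Real.norm_eq_abs, abs_inv, abs_of_pos hz0, inv_mul_cancel₀ hz0.ne']
      have hsq : ‖z‖ • (‖z‖⁻¹ • z) = z := by
        rw [smul_smul, mul_inv_cancel₀ hz0.ne', one_smul]
      have hFq : ‖F (‖z‖⁻¹ • z)‖ = 1 := hFS _ hqS
      have i1 : ‖F x - ‖z‖ • F (‖z‖⁻¹ • z)‖ ≤ t * d := by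
        have h := claim x hx' (‖z‖⁻¹ • z) hqS ‖z‖
        rw [hsq] at h
        have hxz : ‖x - z‖ = t * d := by
          have e : x - z = -(t • (x - y)) := by rw [hz]; abel
          rw [e, norm_neg, hnt]
        rw [hxz] at h
        exact h
      have i2 : ‖F y + ‖z‖ • F (‖z‖⁻¹ • z)‖ ≤ ‖z + y‖ := by
        have h := claim y hy' (‖z‖⁻¹ • z) hqS (-‖z‖)
        rw [neg_smul, sub_neg_eq_add, neg_smul, sub_neg_eq_add, hsq, add_comm y z] at h
        exact h
      have e : (‖z‖ • F (‖z‖⁻¹ • z) - F x) + ((F x - F y) + (F y + ‖z‖ • F (‖z‖⁻¹ • z)))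
          = (2 * ‖z‖) • F (‖z‖⁻¹ • z) := by
        rw [mul_smul, two_smul]; abel
      have h1 : ‖(2 * ‖z‖) • F (‖z‖⁻¹ • z)‖ = 2 * ‖z‖ := by
        rw [norm_smul, Real.norm_eq_abs, hFq, mul_one, abs_of_pos (by linarith)]
      have h2 : ‖(‖z‖ • F (‖z‖⁻¹ • z) - F x) + ((F x - F y) + (F y + ‖z‖ • F (‖z‖⁻¹ • z)))‖
          ≤ ‖‖z‖ • F (‖z‖⁻¹ • z) - F x‖ + (‖F x - F y‖ + ‖F y + ‖z‖ • F (‖z‖⁻¹ • z)‖) :=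
        le_trans (norm_add_le _ _) (add_le_add le_rfl (norm_add_le _ _))
      rw [e, h1] at h2
      have h3 : ‖‖z‖ • F (‖z‖⁻¹ • z) - F x‖ = ‖F x - ‖z‖ • F (‖z‖⁻¹ • z)‖ :=
        norm_sub_rev _ _
      rw [h3] at h2
      linarith
    -- doubling step
    have key2 : ∀ t : ℝ, 2 / d ≤ t →
        2 * ‖x + (2 * t + 1) • (x - y)‖ - (2 * t + 1) * d - 2 * ‖x + t • (x - y)‖
          ≤ ‖F x - F y‖ := by
      intro t ht
      have ht0 : 0 ≤ t := le_trans (div_nonneg (by norm_num) hd.le) ht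
      have ht' : 2 / d ≤ 2 * t + 1 := by linarith
      have hk := key (2 * t + 1) ht'
      have hid : x + (2 * t + 1) • (x - y) + y = (2 : ℝ) • (x + t • (x - y)) := by
        have h21 : (2 * t + 1 : ℝ) = t + t + 1 := by ring
        rw [h21, add_smul, add_smul, one_smul, two_smul]
        abel
      rw [hid, norm_smul, Real.norm_eq_abs, (by norm_num : |(2 : ℝ)| = 2)] at hk
      linarith
    -- finish
    refine le_antisymm ?_ ?_
    · have := hne x hx y hy
      rw [← hd_def] at this
      exact this
    · by_contra hcon
      push_neg at hcon
      set ε := d - ‖F x - F y‖ with hε_def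
      have hε : 0 < ε := by rw [hε_def]; linarith
      have hFxy : ‖F x - F y‖ = d - ε := by rw [hε_def]; ring
      have step : ∀ t : ℝ, 2 / d ≤ t →
          ‖x + (2 * t + 1) • (x - y)‖ - (2 * t + 1) * d
            ≤ (‖x + t • (x - y)‖ - t * d) - ε / 2 := by
        intro t ht
        have hk := key2 t ht
        have hPQ : (2 * t + 1) * d = 2 * (t * d) + d := by ring
        rw [hFxy] at hk
        linarith
      let T : ℕ → ℝ := fun n => Nat.rec (motive := fun _ => ℝ) (2 / d) (fun _ s => 2 * s + 1) n
      have hT0 : T 0 = 2 / d := rfl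
      have hTs : ∀ n, T (n + 1) = 2 * T n + 1 := fun n => rfl
      have hTge : ∀ n, 2 / d ≤ T n := by
        intro n
        induction n with
        | zero => rw [hT0]
        | succ n ih =>
          have h0 : 0 ≤ T n := le_trans (div_nonneg (by norm_num) hd.le) ih
          rw [hTs]; linarith
      have hdec : ∀ n : ℕ, ‖x + T n • (x - y)‖ - T n * d
          ≤ (‖x + T 0 • (x - y)‖ - T 0 * d) - n * (ε / 2) := by
        intro n
        induction n with
        | zero => simp
        | succ n ih =>
          have hs := step (T n) (hTge n)
          rw [← hTs n] at hs
          push_cast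
          push_cast at ih
          linarith
      have hlb : ∀ n : ℕ, -1 ≤ ‖x + T n • (x - y)‖ - T n * d := by
        intro n
        have h0 : 0 ≤ T n := le_trans (div_nonneg (by norm_num) hd.le) (hTge n)
        have hnt : ‖T n • (x - y)‖ = T n * d := by
          rw [norm_smul, Real.norm_eq_abs, abs_of_nonneg h0, ← hd_def]
        have h2 := norm_sub_le (x + T n • (x - y)) x
        have e : x + T n • (x - y) - x = T n • (x - y) := by abel
        rw [e, hnt] at h2
        linarith
      obtain ⟨n, hn⟩ := exists_nat_gt ((‖x + T 0 • (x - y)‖ - T 0 * d + 1) / (ε / 2))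
      have h1 := hdec n
      have h2 := hlb n
      have h3 : ‖x + T 0 • (x - y)‖ - T 0 * d + 1 < n * (ε / 2) := by
        rw [div_lt_iff₀ (by linarith : (0 : ℝ) < ε / 2)] at hn
        linarith
      linarith
end

section
/- Let X be a real Banach space, Y a strictly convex real Banach space, and let F : B_X → B_Y be a non-expansive bijection from the closed unit ball of X onto the closed unit ball of Y. Then F is an isometry: ‖F(x) − F(y)‖ = ‖x − y‖ for all x, y ∈ B_X. -/
set_option linter.unusedSectionVars false

open Metric Set

section Aux

variable {X Y : Type*} [NormedAddCommGroup X] [NormedSpace ℝ X]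
  [NormedAddCommGroup Y] [NormedSpace ℝ Y] [StrictConvexSpace ℝ Y]
  {F : X → Y}

lemma nb_F0 (hbij : Set.BijOn F (closedBall (0 : X) 1) (closedBall (0 : Y) 1))
    (hne : ∀ x ∈ closedBall (0 : X) 1, ∀ y ∈ closedBall (0 : X) 1,
      ‖F x - F y‖ ≤ ‖x - y‖) : F 0 = 0 := by
  by_contra h
  have h0X : (0 : X) ∈ closedBall (0 : X) 1 := by simp
  have hc : 0 < ‖F 0‖ := norm_pos_iff.mpr h
  set c : ℝ := ‖F 0‖ with hcdef
  have hy : ‖(-c⁻¹) • F 0‖ = 1 := by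
    rw [norm_smul, norm_neg, norm_inv, Real.norm_eq_abs, abs_of_pos hc]
    field_simp
    exact hcdef.symm
  have hymem : (-c⁻¹) • F 0 ∈ closedBall (0 : Y) 1 := by
    simpa [mem_closedBall_zero_iff] using hy.le
  obtain ⟨x, hx, hFx⟩ := hbij.surjOn hymem
  have h1 : ‖F x - F 0‖ ≤ ‖x - 0‖ := hne x hx 0 h0X
  have h2 : ‖x - 0‖ ≤ 1 := by simpa [mem_closedBall_zero_iff] using hx
  have h3 : F x - F 0 = (-c⁻¹ - 1) • F 0 := by
    rw [hFx, sub_smul, one_smul]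
  have h4 : ‖F x - F 0‖ = 1 + c := by
    rw [h3, norm_smul, Real.norm_eq_abs, ← hcdef]
    have hneg : (-c⁻¹ - 1 : ℝ) < 0 := by
      have : (0:ℝ) < c⁻¹ + 1 := by positivity
      linarith
    have : |(-c⁻¹ - 1)| = c⁻¹ + 1 := by
      rw [abs_of_neg hneg]; ring
    rw [this]
    field_simp
  linarith

lemma nb_sphere_radial (hbij : Set.BijOn F (closedBall (0 : X) 1) (closedBall (0 : Y) 1))
    (hne : ∀ x ∈ closedBall (0 : X) 1, ∀ y ∈ closedBall (0 : X) 1,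
      ‖F x - F y‖ ≤ ‖x - y‖)
    {a : X} (ha : a ∈ closedBall (0 : X) 1) (hFa : ‖F a‖ = 1) :
    ‖a‖ = 1 ∧ ∀ t : ℝ, t ∈ Icc (0:ℝ) 1 → F (t • a) = t • F a := by
  have hF0 := nb_F0 hbij hne
  have h0X : (0 : X) ∈ closedBall (0 : X) 1 := by simp
  have hna : ‖a‖ = 1 := by
    have h1 : ‖F a - F 0‖ ≤ ‖a - 0‖ := hne a ha 0 h0X
    rw [hF0, sub_zero, sub_zero, hFa] at h1
    have h2 : ‖a‖ ≤ 1 := by simpa [mem_closedBall_zero_iff] using ha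
    linarith
  refine ⟨hna, fun t ht => ?_⟩
  obtain ⟨ht0, ht1⟩ := ht
  have hta : t • a ∈ closedBall (0 : X) 1 := by
    rw [mem_closedBall_zero_iff, norm_smul, hna, Real.norm_eq_abs, abs_of_nonneg ht0]
    simpa using ht1
  set u := F (t • a) with hu
  have h1 : ‖u‖ ≤ t := by
    have := hne (t • a) hta 0 h0X
    rw [hF0, sub_zero, sub_zero, norm_smul, hna, Real.norm_eq_abs, abs_of_nonneg ht0] at this
    simpa using this
  have h2 : ‖F a - u‖ ≤ 1 - t := by
    have := hne a ha (t • a) hta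
    have heq : a - t • a = (1 - t) • a := by rw [sub_smul, one_smul]
    rw [heq, norm_smul, hna, Real.norm_eq_abs, abs_of_nonneg (by linarith)] at this
    simpa using this
  have hsum : ‖u‖ + ‖F a - u‖ = 1 := by
    have h3 : (1:ℝ) ≤ ‖u‖ + ‖F a - u‖ := by
      calc (1:ℝ) = ‖F a‖ := hFa.symm
        _ = ‖u + (F a - u)‖ := by rw [add_sub_cancel]
        _ ≤ ‖u‖ + ‖F a - u‖ := norm_add_le _ _
    linarith
  have hnu : ‖u‖ = t := by linarith [h1, h2, hsum]
  have hray : SameRay ℝ u (F a - u) := by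
    rw [sameRay_iff_norm_add]
    rw [add_sub_cancel, hFa, hsum]
  obtain ⟨r, s, hr, hs, hrs, h₁, h₂⟩ := hray.exists_eq_smul_add
  have hFaeq : u + (F a - u) = F a := by abel
  rw [hFaeq] at h₁
  -- u = r • F a, so ‖u‖ = r, hence u = t • F a
  have : ‖u‖ = r := by
    rw [h₁, norm_smul, hFa, Real.norm_eq_abs, abs_of_nonneg hr, mul_one]
  rw [h₁, ← this, hnu]


lemma nb_sphere_neg (hbij : Set.BijOn F (closedBall (0 : X) 1) (closedBall (0 : Y) 1))
    (hne : ∀ x ∈ closedBall (0 : X) 1, ∀ y ∈ closedBall (0 : X) 1,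
      ‖F x - F y‖ ≤ ‖x - y‖)
    {a : X} (ha : a ∈ closedBall (0 : X) 1) (hFa : ‖F a‖ = 1) :
    F (-a) = - F a := by
  have hF0 := nb_F0 hbij hne
  have h0X : (0 : X) ∈ closedBall (0 : X) 1 := by simp
  have hna : ‖a‖ = 1 := (nb_sphere_radial hbij hne ha hFa).1
  set y := F a with hy
  have hymem : -y ∈ closedBall (0 : Y) 1 := by
    simp [mem_closedBall_zero_iff, hFa]
  obtain ⟨b, hb, hFb⟩ := hbij.surjOn hymem
  have hFbn : ‖F b‖ = 1 := by rw [hFb, norm_neg, hFa]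
  have hnb : ‖b‖ = 1 := (nb_sphere_radial hbij hne hb hFbn).1
  set m : X := (2:ℝ)⁻¹ • (a + b) with hm
  have hmmem : m ∈ closedBall (0 : X) 1 := by
    rw [mem_closedBall_zero_iff, hm, norm_smul]
    have : ‖a + b‖ ≤ 2 := by
      calc ‖a + b‖ ≤ ‖a‖ + ‖b‖ := norm_add_le _ _
        _ = 2 := by rw [hna, hnb]; norm_num
    rw [norm_inv, Real.norm_eq_abs]
    rw [abs_of_pos (by norm_num : (0:ℝ) < 2)]
    linarith
  have hma : m - a = (2:ℝ)⁻¹ • (b - a) := by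
    rw [hm, smul_sub, smul_add]; module
  have hmb : m - b = (2:ℝ)⁻¹ • (a - b) := by
    rw [hm, smul_sub, smul_add]; module
  have h1 : ‖F m - y‖ ≤ (2:ℝ)⁻¹ * ‖b - a‖ := by
    have := hne m hmmem a ha
    rw [hma] at this
    rw [norm_smul, norm_inv, Real.norm_eq_abs, abs_of_pos (by norm_num : (0:ℝ) < 2)] at this
    exact this
  have h2 : ‖F m + y‖ ≤ (2:ℝ)⁻¹ * ‖a - b‖ := by
    have := hne m hmmem b hb
    rw [hmb, hFb, sub_neg_eq_add] at this
    rw [norm_smul, norm_inv, Real.norm_eq_abs, abs_of_pos (by norm_num : (0:ℝ) < 2)] at this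
    exact this
  have hab2 : ‖a - b‖ ≤ 2 := by
    calc ‖a - b‖ ≤ ‖a‖ + ‖b‖ := norm_sub_le _ _
      _ = 2 := by rw [hna, hnb]; norm_num
  have hba : ‖b - a‖ = ‖a - b‖ := norm_sub_rev _ _
  have hch : (2:ℝ) ≤ ‖y - F m‖ + ‖y + F m‖ := by
    have : (y - F m) + (y + F m) = (2:ℝ) • y := by module
    calc (2:ℝ) = ‖(2:ℝ) • y‖ := by
            rw [norm_smul, hFa, Real.norm_eq_abs, abs_of_pos (by norm_num : (0:ℝ) < 2)]; ring
      _ = ‖(y - F m) + (y + F m)‖ := by rw [this]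
      _ ≤ ‖y - F m‖ + ‖y + F m‖ := norm_add_le _ _
  have hyFm : ‖y - F m‖ = ‖F m - y‖ := norm_sub_rev _ _
  have hyFm2 : ‖y + F m‖ = ‖F m + y‖ := by rw [add_comm]
  have he1 : ‖y - F m‖ = 1 := by
    rw [hyFm]; rw [hyFm, hyFm2] at hch; linarith
  have he2 : ‖y + F m‖ = 1 := by
    rw [hyFm2]; rw [hyFm, hyFm2] at hch; linarith
  have hadd : ‖(y - F m) + (y + F m)‖ = ‖y - F m‖ + ‖y + F m‖ := by
    have h2y : (y - F m) + (y + F m) = (2:ℝ) • y := by module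
    rw [h2y, he1, he2, norm_smul, hFa, Real.norm_eq_abs,
      abs_of_pos (by norm_num : (0:ℝ) < 2)]
    ring
  have heqv : y - F m = y + F m :=
    eq_of_norm_eq_of_norm_add_eq (by rw [he1, he2]) hadd
  have hFm0 : F m = 0 := by
    have : (2:ℝ) • F m = 0 := by
      have := sub_eq_iff_eq_add.mp heqv
      -- y = y + F m + F m
      have h' : F m + F m = 0 := by
        have := heqv
        have : (y + F m) - (y - F m) = 0 := by rw [heqv]; abel
        calc F m + F m = (y + F m) - (y - F m) := by abel
          _ = 0 := this
      calc (2:ℝ) • F m = F m + F m := by module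
        _ = 0 := h'
    have h2ne : (2:ℝ) ≠ 0 := by norm_num
    exact (smul_eq_zero.mp this).resolve_left h2ne
  have hm0 : m = 0 := by
    apply hbij.injOn hmmem h0X
    rw [hFm0, hF0]
  have hbeq : b = -a := by
    have : a + b = 0 := by
      have h2ne : ((2:ℝ)⁻¹ : ℝ) ≠ 0 := by norm_num
      have := hm0
      rw [hm] at this
      exact (smul_eq_zero.mp this).resolve_left h2ne
    linear_combination (norm := module) this
  rw [← hbeq, hFb]

lemma nb_radial (hbij : Set.BijOn F (closedBall (0 : X) 1) (closedBall (0 : Y) 1))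
    (hne : ∀ x ∈ closedBall (0 : X) 1, ∀ y ∈ closedBall (0 : X) 1,
      ‖F x - F y‖ ≤ ‖x - y‖) :
    ∀ x ∈ closedBall (0 : X) 1, ‖F x‖ = ‖x‖ ∧
      ∀ s : ℝ, |s| ≤ 1 → F (s • x) = s • F x := by
  have hF0 := nb_F0 hbij hne
  have h0X : (0 : X) ∈ closedBall (0 : X) 1 := by simp
  intro x hx
  by_cases hFx0 : F x = 0
  · have hx0 : x = 0 := by
      apply hbij.injOn hx h0X
      rw [hFx0, hF0]
    subst hx0
    constructor
    · rw [hFx0]; simp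
    · intro s _
      simp [hFx0]
  · set t : ℝ := ‖F x‖ with htdef
    have ht0 : 0 < t := norm_pos_iff.mpr hFx0
    have ht1 : t ≤ 1 := by
      have := hne x hx 0 h0X
      rw [hF0, sub_zero, sub_zero] at this
      have hx1 : ‖x‖ ≤ 1 := by simpa [mem_closedBall_zero_iff] using hx
      linarith
    set y : Y := t⁻¹ • F x with hydef
    have hyn : ‖y‖ = 1 := by
      rw [hydef, norm_smul, norm_inv, Real.norm_eq_abs, abs_of_pos ht0, ← htdef]
      field_simp
    have hymem : y ∈ closedBall (0 : Y) 1 := by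
      simp [mem_closedBall_zero_iff, hyn]
    obtain ⟨a, haB, hFa⟩ := hbij.surjOn hymem
    have hFan : ‖F a‖ = 1 := by rw [hFa, hyn]
    obtain ⟨han, hrad⟩ := nb_sphere_radial hbij hne haB hFan
    have hta : F (t • a) = F x := by
      rw [hrad t ⟨ht0.le, ht1⟩, hFa, hydef, smul_smul]
      rw [mul_inv_cancel₀ ht0.ne', one_smul]
    have htamem : t • a ∈ closedBall (0 : X) 1 := by
      rw [mem_closedBall_zero_iff, norm_smul, han, Real.norm_eq_abs, abs_of_pos ht0]
      simpa using ht1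
    have hxta : x = t • a := hbij.injOn hx htamem (by rw [hta])
    have hxn : ‖x‖ = t := by
      rw [hxta, norm_smul, han, Real.norm_eq_abs, abs_of_pos ht0]; ring
    refine ⟨hxn.symm ▸ rfl, fun s hs => ?_⟩
    rcases le_or_gt 0 s with hs0 | hs0
    · have hst : s * t ∈ Icc (0:ℝ) 1 := by
        constructor
        · positivity
        · have hs1 : s ≤ 1 := by rw [abs_of_nonneg hs0] at hs; exact hs
          calc s * t ≤ 1 * 1 := by
                apply mul_le_mul hs1 ht1 ht0.le; norm_num
            _ = 1 := by norm_num
      have h1 : s • x = (s * t) • a := by rw [hxta, smul_smul]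
      rw [h1, hrad (s * t) hst, hFa, hydef, smul_smul]
      rw [mul_assoc, mul_inv_cancel₀ ht0.ne', mul_one]
    · -- s < 0
      have hFnega : F (-a) = - F a := nb_sphere_neg hbij hne haB hFan
      have hnegamem : -a ∈ closedBall (0 : X) 1 := by
        rw [mem_closedBall_zero_iff, norm_neg, han]
      have hFnegan : ‖F (-a)‖ = 1 := by rw [hFnega, norm_neg, hFan]
      obtain ⟨_, hradneg⟩ := nb_sphere_radial hbij hne hnegamem hFnegan
      have hst : (-s) * t ∈ Icc (0:ℝ) 1 := by
        constructor
        · have : 0 < -s := by linarith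
          positivity
        · have hs1 : -s ≤ 1 := by rw [abs_of_neg hs0] at hs; exact hs
          calc (-s) * t ≤ 1 * 1 := by
                apply mul_le_mul hs1 ht1 ht0.le; norm_num
            _ = 1 := by norm_num
      have h1 : s • x = ((-s) * t) • (-a) := by
        rw [hxta, smul_smul, smul_neg, ← neg_smul]; ring_nf
      rw [h1, hradneg ((-s) * t) hst, hFnega, hFa, hydef, smul_neg, smul_smul]
      rw [mul_assoc, mul_inv_cancel₀ ht0.ne', mul_one, ← neg_smul, neg_neg]


lemma nb_key (hbij : Set.BijOn F (closedBall (0 : X) 1) (closedBall (0 : Y) 1))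
    (hne : ∀ x ∈ closedBall (0 : X) 1, ∀ y ∈ closedBall (0 : X) 1,
      ‖F x - F y‖ ≤ ‖x - y‖)
    {x₁ x₂ a : X} (hx₁ : x₁ ∈ closedBall (0 : X) 1) (hx₂ : x₂ ∈ closedBall (0 : X) 1)
    (hanorm : ‖a‖ = 1) {ε : ℝ} (hε : 0 < ε) (hε1 : ε ≤ 1) :
    2 - ‖a - ε • x₁‖ - ‖a + ε • x₂‖ ≤ ε * ‖F x₁ - F x₂‖ := by
  have haB : a ∈ closedBall (0 : X) 1 := by
    simp [mem_closedBall_zero_iff, hanorm]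
  have hnegaB : -a ∈ closedBall (0 : X) 1 := by
    simp [mem_closedBall_zero_iff, hanorm]
  have hx₁n : ‖x₁‖ ≤ 1 := by simpa [mem_closedBall_zero_iff] using hx₁
  have hx₂n : ‖x₂‖ ≤ 1 := by simpa [mem_closedBall_zero_iff] using hx₂
  have hεx₁B : ε • x₁ ∈ closedBall (0 : X) 1 := by
    rw [mem_closedBall_zero_iff, norm_smul, Real.norm_eq_abs, abs_of_pos hε]
    calc ε * ‖x₁‖ ≤ 1 * 1 := by apply mul_le_mul hε1 hx₁n (norm_nonneg _); norm_num
      _ = 1 := by norm_num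
  have hεx₂B : ε • x₂ ∈ closedBall (0 : X) 1 := by
    rw [mem_closedBall_zero_iff, norm_smul, Real.norm_eq_abs, abs_of_pos hε]
    calc ε * ‖x₂‖ ≤ 1 * 1 := by apply mul_le_mul hε1 hx₂n (norm_nonneg _); norm_num
      _ = 1 := by norm_num
  have hFan : ‖F a‖ = 1 := by
    rw [(nb_radial hbij hne a haB).1, hanorm]
  have hFane : F a ≠ 0 := by
    intro h; rw [h, norm_zero] at hFan; norm_num at hFan
  obtain ⟨g, hg1, hgy⟩ := exists_dual_vector ℝ (F a) (norm_ne_zero_iff.mpr hFane)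
  rw [hFan] at hgy
  -- bound (A) : 1 - ‖a - ε•x₁‖ ≤ g (F (ε•x₁))
  have hA : 1 - ‖a - ε • x₁‖ ≤ g (F (ε • x₁)) := by
    have h1 : g (F a - F (ε • x₁)) ≤ ‖a - ε • x₁‖ := by
      calc g (F a - F (ε • x₁)) ≤ ‖g (F a - F (ε • x₁))‖ := le_abs_self _
        _ ≤ ‖g‖ * ‖F a - F (ε • x₁)‖ := g.le_opNorm _
        _ = ‖F a - F (ε • x₁)‖ := by rw [hg1, one_mul]
        _ ≤ ‖a - ε • x₁‖ := hne a haB (ε • x₁) hεx₁B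
    have h2 : g (F a - F (ε • x₁)) = 1 - g (F (ε • x₁)) := by
      rw [map_sub, hgy]; push_cast; ring
    linarith
  -- bound (B) : g (F (ε•x₂)) ≤ ‖a + ε•x₂‖ - 1
  have hFnega : F (-a) = - F a := by
    have := (nb_radial hbij hne a haB).2 (-1) (by norm_num)
    rw [neg_one_smul] at this
    rw [this, neg_one_smul]
  have hB : g (F (ε • x₂)) ≤ ‖a + ε • x₂‖ - 1 := by
    have h1 : g (F (ε • x₂) - F (-a)) ≤ ‖ε • x₂ - (-a)‖ := by
      calc g (F (ε • x₂) - F (-a)) ≤ ‖g (F (ε • x₂) - F (-a))‖ := le_abs_self _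
        _ ≤ ‖g‖ * ‖F (ε • x₂) - F (-a)‖ := g.le_opNorm _
        _ = ‖F (ε • x₂) - F (-a)‖ := by rw [hg1, one_mul]
        _ ≤ ‖ε • x₂ - (-a)‖ := hne (ε • x₂) hεx₂B (-a) hnegaB
    have h2 : g (F (ε • x₂) - F (-a)) = g (F (ε • x₂)) + 1 := by
      rw [map_sub, hFnega, map_neg, hgy]; push_cast; ring
    have h3 : ‖ε • x₂ - (-a)‖ = ‖a + ε • x₂‖ := by
      rw [sub_neg_eq_add, add_comm]
    linarith
  -- radial linearity
  have hr1 : F (ε • x₁) = ε • F x₁ := by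
    apply (nb_radial hbij hne x₁ hx₁).2
    rw [abs_of_pos hε]; exact hε1
  have hr2 : F (ε • x₂) = ε • F x₂ := by
    apply (nb_radial hbij hne x₂ hx₂).2
    rw [abs_of_pos hε]; exact hε1
  rw [hr1] at hA
  rw [hr2] at hB
  rw [map_smul, smul_eq_mul] at hA hB
  have hgd : g (F x₁) - g (F x₂) ≤ ‖F x₁ - F x₂‖ := by
    calc g (F x₁) - g (F x₂) = g (F x₁ - F x₂) := by rw [map_sub]
      _ ≤ ‖g (F x₁ - F x₂)‖ := le_abs_self _
      _ ≤ ‖g‖ * ‖F x₁ - F x₂‖ := g.le_opNorm _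
      _ = ‖F x₁ - F x₂‖ := by rw [hg1, one_mul]
  have := mul_le_mul_of_nonneg_left hgd hε.le
  nlinarith [hA, hB]


lemma nb_line_deriv {V : Type*} [NormedAddCommGroup V] [NormedSpace ℝ V]
    {N : V → ℝ} {ℓ : V →L[ℝ] ℝ} {p : V} (h : HasFDerivAt N ℓ p) (u : V) :
    HasDerivAt (fun t : ℝ => N (p + t • u)) (ℓ u) 0 := by
  have hline : HasDerivAt (fun t : ℝ => p + t • u) u 0 := by
    have h1 : HasDerivAt (fun t : ℝ => t • u) ((1:ℝ) • u) 0 :=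
      (hasDerivAt_id (0:ℝ)).smul_const u
    simpa using h1.const_add p
  have h0 : p = (fun t : ℝ => p + t • u) 0 := by simp
  have hcomp := HasFDerivAt.comp_hasDerivAt_of_eq (l := N) (l' := ℓ)
    (f := fun t : ℝ => p + t • u) (x := 0) h hline h0
  exact hcomp

end Aux

set_option maxHeartbeats 1000000 in
open MeasureTheory in
theorem nb_main_aux
    {X Y : Type*} [NormedAddCommGroup X] [NormedSpace ℝ X]
    [NormedAddCommGroup Y] [NormedSpace ℝ Y]
    [StrictConvexSpace ℝ Y]
    (F : X → Y)
    (hbij : Set.BijOn F (closedBall (0 : X) 1) (closedBall (0 : Y) 1))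
    (hne : ∀ x ∈ closedBall (0 : X) 1, ∀ y ∈ closedBall (0 : X) 1,
      ‖F x - F y‖ ≤ ‖x - y‖) :
    ∀ x ∈ closedBall (0 : X) 1, ∀ y ∈ closedBall (0 : X) 1,
      ‖F x - F y‖ = ‖x - y‖ := by
  intro x₁ hx₁ x₂ hx₂
  refine le_antisymm (hne x₁ hx₁ x₂ hx₂) ?_
  by_cases heqc : x₁ = x₂
  · simp [heqc]
  have hx₁n : ‖x₁‖ ≤ 1 := by simpa [mem_closedBall_zero_iff] using hx₁
  have hx₂n : ‖x₂‖ ≤ 1 := by simpa [mem_closedBall_zero_iff] using hx₂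
  set D : ℝ := ‖x₁ - x₂‖ with hDdef
  set ρ : ℝ := ‖F x₁ - F x₂‖ with hρdef
  have hD : 0 < D := norm_pos_iff.mpr (sub_ne_zero.mpr heqc)
  have hD2 : D ≤ 2 := by
    have := norm_sub_le x₁ x₂
    rw [← hDdef] at this
    linarith
  have hρ0 : 0 ≤ ρ := norm_nonneg _
  show D ≤ ρ
  -- the finite-dimensional subspace
  set V : Submodule ℝ X := Submodule.span ℝ ({x₁, x₂} : Set X) with hV
  haveI : FiniteDimensional ℝ V := FiniteDimensional.span_of_finite ℝ (Set.toFinite _)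
  letI : MeasurableSpace V := borel V
  haveI : BorelSpace V := ⟨rfl⟩
  set μ : Measure V := (Module.finBasis ℝ V).addHaar with hμ
  have hx₁V : x₁ ∈ V := Submodule.subset_span (by simp)
  have hx₂V : x₂ ∈ V := Submodule.subset_span (by simp)
  set x₁' : V := ⟨x₁, hx₁V⟩ with hx₁'
  set x₂' : V := ⟨x₂, hx₂V⟩ with hx₂'
  have hsubnorm : ∀ v : V, ‖v‖ = ‖(v : X)‖ := fun v => Submodule.coe_norm v
  have hDsub : ‖x₁' - x₂'‖ = D := by
    rw [hsubnorm]
    norm_num [hx₁', hx₂', hDdef]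
  set w' : V := D⁻¹ • (x₁' - x₂') with hw'
  have hwn : ‖w'‖ = 1 := by
    rw [hw', norm_smul, hDsub, norm_inv, Real.norm_eq_abs, abs_of_pos hD]
    field_simp
  have hNlip : LipschitzWith 1 (fun v : V => ‖v‖) := lipschitzWith_one_norm
  have hae : ∀ᵐ v ∂μ, DifferentiableAt ℝ (fun v : V => ‖v‖) v :=
    hNlip.ae_differentiableAt
  -- main quantitative step
  suffices hsuf : ∀ δ : ℝ, 0 < δ → δ < 1/2 → D * (1 - 2*δ) ≤ ρ by
    by_contra hlt
    push_neg at hlt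
    have hDρ : 0 < D - ρ := by linarith
    set δ : ℝ := (D - ρ)/8 with hδdef
    have hδ0 : 0 < δ := by positivity
    have hδh : δ < 1/2 := by
      rw [hδdef]
      nlinarith
    have := hsuf δ hδ0 hδh
    nlinarith
  intro δ hδ0 hδh
  -- pick a differentiability point of the norm near w'
  have hball : μ (Metric.ball w' δ) ≠ 0 := (measure_ball_pos μ w' hδ0).ne'
  have hexists : ∃ v : V, v ∈ Metric.ball w' δ ∧
      DifferentiableAt ℝ (fun v : V => ‖v‖) v := by
    by_contra hcon
    push_neg at hcon
    apply hball
    have hsub2 : Metric.ball w' δ ⊆ {v : V | ¬ DifferentiableAt ℝ (fun v : V => ‖v‖) v} :=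
      fun v hv => hcon v hv
    exact measure_mono_null hsub2 (by simpa [ae_iff] using hae)
  obtain ⟨v, hvball, hvdiff⟩ := hexists
  have hvw : ‖v - w'‖ < δ := by
    rw [← dist_eq_norm]
    exact Metric.mem_ball.mp hvball
  have hvn_lb : 1 - δ < ‖v‖ := by
    have h1 : ‖w'‖ - ‖v‖ ≤ ‖w' - v‖ := norm_sub_norm_le _ _
    rw [norm_sub_rev] at h1
    rw [hwn] at h1
    linarith
  have hvne : v ≠ 0 := by
    intro h
    rw [h, norm_zero] at hvn_lb
    linarith
  set c : ℝ := ‖v‖ with hcdef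
  have hc0 : 0 < c := norm_pos_iff.mpr hvne
  set a' : V := c⁻¹ • v with ha'
  have han' : ‖a'‖ = 1 := by
    rw [ha', norm_smul, norm_inv, Real.norm_eq_abs, abs_of_pos hc0, ← hcdef]
    field_simp
  -- differentiability at a'
  have hNdiff : DifferentiableAt ℝ (fun u : V => ‖u‖) a' := by
    have hfun : (fun u : V => ‖u‖) = fun u : V => c⁻¹ * ‖c • u‖ := by
      funext u
      rw [norm_smul, Real.norm_eq_abs, abs_of_pos hc0]
      field_simp
    rw [hfun]
    apply DifferentiableAt.const_mul
    have h1 : DifferentiableAt ℝ (fun u : V => c • u) a' :=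
      (differentiable_id.const_smul c).differentiableAt
    have h2 : DifferentiableAt ℝ (fun u : V => ‖u‖) (c • a') := by
      have hca : c • a' = v := by
        rw [ha', smul_smul, mul_inv_cancel₀ hc0.ne', one_smul]
      rw [hca]
      exact hvdiff
    exact h2.comp a' h1
  set ℓ : V →L[ℝ] ℝ := fderiv ℝ (fun u : V => ‖u‖) a' with hℓ
  have hLd : HasFDerivAt (fun u : V => ‖u‖) ℓ a' := hNdiff.hasFDerivAt
  -- ℓ a' = 1
  have hla : ℓ a' = 1 := by
    have hq := nb_line_deriv hLd a'
    have hev : (fun t : ℝ => ‖a' + t • a'‖) =ᶠ[nhds (0:ℝ)] (fun t : ℝ => 1 + t) := by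
      filter_upwards [Ioo_mem_nhds (by norm_num : (-1:ℝ) < 0) (by norm_num : (0:ℝ) < 1)]
        with t ht
      have h1 : a' + t • a' = (1 + t) • a' := by module
      rw [h1, norm_smul, han', mul_one, Real.norm_eq_abs,
        abs_of_pos (by linarith [ht.1] : (0:ℝ) < 1 + t)]
    have h1 : HasDerivAt (fun t : ℝ => 1 + t) (ℓ a') 0 := hq.congr_of_eventuallyEq hev.symm
    have h2 : HasDerivAt (fun t : ℝ => 1 + t) 1 0 := by
      simpa using (hasDerivAt_id (0:ℝ)).const_add 1
    exact h1.unique h2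
  -- ‖ℓ‖ ≤ 1
  have hlnorm : ‖ℓ‖ ≤ 1 := by
    have := norm_fderiv_le_of_lipschitz ℝ hNlip (x₀ := a')
    simpa [hℓ] using this
  -- the derivative inequality
  have hq1 : HasDerivAt (fun ε : ℝ => ‖a' - ε • x₁'‖) (-(ℓ x₁')) 0 := by
    have := nb_line_deriv hLd (-x₁')
    simp only [smul_neg, ← sub_eq_add_neg, map_neg] at this
    exact this
  have hq2 : HasDerivAt (fun ε : ℝ => ‖a' + ε • x₂'‖) (ℓ x₂') 0 := nb_line_deriv hLd x₂'
  set q : ℝ → ℝ := fun ε => 2 - ‖a' - ε • x₁'‖ - ‖a' + ε • x₂'‖ with hqdef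
  have hqD : HasDerivAt q (ℓ x₁' - ℓ x₂') 0 := by
    have h1 := (hq1.const_sub 2).sub hq2
    have h2 : - -ℓ x₁' - ℓ x₂' = ℓ x₁' - ℓ x₂' := by ring
    rw [h2] at h1
    exact h1
  have hq0 : q 0 = 0 := by
    have h1 : q 0 = 2 - ‖a'‖ - ‖a'‖ := by
      rw [hqdef]; norm_num
    rw [h1, han']; norm_num
  have hslope : Filter.Tendsto (fun ε : ℝ => q ε / ε) (nhdsWithin 0 (Set.Ioi 0))
      (nhds (ℓ x₁' - ℓ x₂')) := by
    have h1 := hasDerivAt_iff_tendsto_slope.mp hqD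
    have h2 : (slope q 0) = fun ε : ℝ => q ε / ε := by
      funext ε
      rw [slope_def_field, hq0]
      simp
    rw [h2] at h1
    exact h1.mono_left (nhdsWithin_mono 0 (fun x hx => Set.mem_compl_singleton_iff.mpr (ne_of_gt hx)))
  have hanX : ‖(a' : X)‖ = 1 := by rw [← hsubnorm]; exact han'
  have hev2 : ∀ᶠ ε in nhdsWithin 0 (Set.Ioi 0), q ε / ε ≤ ρ := by
    filter_upwards [Ioc_mem_nhdsGT_of_mem
      (⟨le_refl (0:ℝ), by norm_num⟩ : (0:ℝ) ∈ Set.Ico 0 1)] with ε hε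
    obtain ⟨hε0, hε1⟩ := hε
    have hkey := nb_key hbij hne hx₁ hx₂ hanX hε0 hε1
    have hco1 : ‖a' - ε • x₁'‖ = ‖(a' : X) - ε • x₁‖ := by
      rw [hsubnorm]; push_cast; rfl
    have hco2 : ‖a' + ε • x₂'‖ = ‖(a' : X) + ε • x₂‖ := by
      rw [hsubnorm]; push_cast; rfl
    rw [div_le_iff₀ hε0]
    have hqε : q ε = 2 - ‖(a' : X) - ε • x₁‖ - ‖(a' : X) + ε • x₂‖ := by
      rw [hqdef]; simp only []; rw [hco1, hco2]
    rw [hqε]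
    calc 2 - ‖(a' : X) - ε • x₁‖ - ‖(a' : X) + ε • x₂‖ ≤ ε * ρ := hkey
      _ = ρ * ε := by ring
  have hfin : ℓ x₁' - ℓ x₂' ≤ ρ := le_of_tendsto hslope hev2
  have hmap : ℓ x₁' - ℓ x₂' = D * ℓ w' := by
    rw [← map_sub]
    have h1 : x₁' - x₂' = D • w' := by
      rw [hw', smul_inv_smul₀ hD.ne']
    rw [h1, ℓ.map_smul, smul_eq_mul]
  have haw : ‖a' - w'‖ < 2 * δ := by
    have h1 : ‖a' - v‖ = |1 - c| := by
      have heq : a' - v = (c⁻¹ - 1) • v := by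
        rw [ha', sub_smul, one_smul]
      have hmul : (c⁻¹ - 1) * c = 1 - c := by field_simp
      rw [heq, norm_smul, Real.norm_eq_abs, ← hcdef]
      have habs : |c⁻¹ - 1| * c = |(c⁻¹ - 1) * c| := by
        rw [abs_mul, abs_of_pos hc0]
      rw [habs, hmul]
    have h2 : |1 - c| ≤ ‖v - w'‖ := by
      have h3 := abs_norm_sub_norm_le w' v
      rw [hwn, ← hcdef, norm_sub_rev] at h3
      exact h3
    calc ‖a' - w'‖ ≤ ‖a' - v‖ + ‖v - w'‖ := by
          have := norm_add_le (a' - v) (v - w')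
          simpa using this
      _ = |1 - c| + ‖v - w'‖ := by rw [h1]
      _ ≤ ‖v - w'‖ + ‖v - w'‖ := by linarith
      _ < 2 * δ := by linarith
  have hlw : 1 - 2*δ ≤ ℓ w' := by
    have h1 : |ℓ (a' - w')| ≤ ‖a' - w'‖ := by
      calc |ℓ (a' - w')| = ‖ℓ (a' - w')‖ := (Real.norm_eq_abs _).symm
        _ ≤ ‖ℓ‖ * ‖a' - w'‖ := ℓ.le_opNorm _
        _ ≤ 1 * ‖a' - w'‖ := by
            apply mul_le_mul_of_nonneg_right hlnorm (norm_nonneg _)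
        _ = ‖a' - w'‖ := by ring
    have h2 : ℓ w' = 1 - ℓ (a' - w') := by
      rw [map_sub, hla]; ring
    have h3 : ℓ (a' - w') ≤ |ℓ (a' - w')| := le_abs_self _
    rw [h2]
    have : |ℓ (a' - w')| ≤ 2 * δ := by linarith
    linarith
  calc D * (1 - 2*δ) ≤ D * ℓ w' := mul_le_mul_of_nonneg_left hlw hD.le
    _ = ℓ x₁' - ℓ x₂' := hmap.symm
    _ ≤ ρ := hfin

theorem nonexpansive_bijection_strictly_convex_is_isometry
    {X Y : Type*} [NormedAddCommGroup X] [NormedSpace ℝ X] [CompleteSpace X]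
    [NormedAddCommGroup Y] [NormedSpace ℝ Y] [CompleteSpace Y]
    [StrictConvexSpace ℝ Y]
    (F : X → Y)
    (hbij : Set.BijOn F (closedBall (0 : X) 1) (closedBall (0 : Y) 1))
    (hne : ∀ x ∈ closedBall (0 : X) 1, ∀ y ∈ closedBall (0 : X) 1,
      ‖F x - F y‖ ≤ ‖x - y‖) :
    ∀ x ∈ closedBall (0 : X) 1, ∀ y ∈ closedBall (0 : X) 1,
      ‖F x - F y‖ = ‖x - y‖ := by
  exact nb_main_aux F hbij hne
end
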